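/- arXiv:2406.12205 — 3 statements merged into one kernel-verified Lean document; each statement's English description precedes it below -/
import Mathlib

section
/- Instance-dependent upper bound for RL-LOW (Theorem 1): There exists a constant C_up > 0 depending only on L such that for every consistent offline RLHF instance v there is a threshold n₀ with the following property: for every sample size n ≥ n₀ such that n·N_{k,i,j} ∈ ℕ for all (k,i,j), and for every measurable choice of outputs î_k ∈ Î_k, the expected simple regret of RL-LOW satisfies E[R_n] ≤ exp(−n/(C_up·H(v))). -/
open MeasureTheory ProbabilityTheory Real

namespace RLHF

/-- The logistic sigmoid function. -/
noncomputable def sigmoid (x : ℝ) : ℝ := Real.exp x / (1 + Real.exp x)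

/-- Clipping to the interval `[1/(1+e^{2L}), e^{2L}/(1+e^{2L})]`. -/
noncomputable def clip (L x : ℝ) : ℝ :=
  max (1 / (1 + Real.exp (2 * L))) (min (Real.exp (2 * L) / (1 + Real.exp (2 * L))) x)

/-- The logit (log-odds) function. -/
noncomputable def logit (x : ℝ) : ℝ := Real.log (x / (1 - x))

/-- An offline RLHF instance: state distribution, feature map, parameter vector and
sampling proportions. -/
structure Inst (S A d : ℕ) where
  ρ : Fin S → ℝ
  φ : Fin S → Fin A → EuclideanSpace ℝ (Fin d)
  θ : EuclideanSpace ℝ (Fin d)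
  N : Fin S → Fin A → Fin A → ℝ
  ρ_pos : ∀ k, 0 < ρ k
  ρ_sum : ∑ k, ρ k = 1
  N_nonneg : ∀ k i j, 0 ≤ N k i j
  N_sum : ∑ k, ∑ i, ∑ j, N k i j = 1
  φ_ne : ∀ k i j, i ≠ j → φ k i ≠ φ k j

namespace Inst

variable {S A d : ℕ}

/-- The reward of action `i` in state `k`. -/
noncomputable def r (v : Inst S A d) (k : Fin S) (i : Fin A) : ℝ :=
  @inner ℝ _ _ (v.φ k i) v.θ

/-- The span of the sampled feature differences. -/
def W (v : Inst S A d) : Submodule ℝ (EuclideanSpace ℝ (Fin d)) :=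
  Submodule.span ℝ {x | ∃ k i j, 0 < v.N k i j ∧ x = v.φ k i - v.φ k j}

/-- Consistency of an instance. -/
def Consistent (v : Inst S A d) : Prop :=
  ∀ k i j, v.φ k i - v.φ k j ∈ v.W

/-- `istar` assigns to each state its unique best action. -/
def BestAction (v : Inst S A d) (istar : Fin S → Fin A) : Prop :=
  ∀ k j, j ≠ istar k → v.r k j < v.r k (istar k)

/-- The suboptimality gap. -/
noncomputable def gap (v : Inst S A d) (istar : Fin S → Fin A) (k : Fin S) (i : Fin A) : ℝ :=
  v.r k (istar k) - v.r k i

/-- The objective value of a candidate weight vector. -/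
noncomputable def cost (v : Inst S A d) (u : Fin S → Fin A → Fin A → ℝ) : ℝ :=
  ∑ k', ∑ i', ∑ j', if 0 < v.N k' i' j' then (u k' i' j') ^ 2 / v.N k' i' j' else 0

/-- Feasibility of a weight vector for the pair `(i,j)` in state `k`: it vanishes where
`N` vanishes and expresses `φ(k,i) − φ(k,j)` as a linear combination of sampled feature
differences. -/
def Feasible (v : Inst S A d) (k : Fin S) (i j : Fin A)
    (u : Fin S → Fin A → Fin A → ℝ) : Prop :=
  (∀ k' i' j', v.N k' i' j' = 0 → u k' i' j' = 0) ∧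
  v.φ k i - v.φ k j = ∑ k', ∑ i', ∑ j', u k' i' j' • (v.φ k' i' - v.φ k' j')

/-- `w` is a locally optimal weight vector for `(k,i,j)`. -/
def IsLOW (v : Inst S A d) (k : Fin S) (i j : Fin A)
    (w : Fin S → Fin A → Fin A → ℝ) : Prop :=
  v.Feasible k i j w ∧ ∀ u, v.Feasible k i j u → v.cost w ≤ v.cost u

/-- `γ̃_{k,i}`-type quantity: weighted sum of absolute weights over `1/√N`. -/
noncomputable def gammaTilde (v : Inst S A d) (u : Fin S → Fin A → Fin A → ℝ) : ℝ :=
  ∑ k', ∑ i', ∑ j',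
    if 0 < v.N k' i' j' then |u k' i' j'| / Real.sqrt (v.N k' i' j') else 0

/-- `γ^DP`-type quantity. -/
noncomputable def gammaDP (v : Inst S A d) (u : Fin S → Fin A → Fin A → ℝ) : ℝ :=
  ∑ k', ∑ i', ∑ j',
    if 0 < v.N k' i' j' then (u k' i' j' / v.N k' i' j') ^ 2 else 0

/-- `γ̃^DP`-type quantity. -/
noncomputable def gammaTildeDP (v : Inst S A d) (u : Fin S → Fin A → Fin A → ℝ) : ℝ :=
  ∑ k', ∑ i', ∑ j',
    if 0 < v.N k' i' j' then |u k' i' j'| / v.N k' i' j' else 0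

/-- The hardness parameter `H(v)`, where `w k i j` denotes the locally optimal weights
for the triple `(k,i,j)`. -/
noncomputable def H (v : Inst S A d) (istar : Fin S → Fin A)
    (w : Fin S → Fin A → Fin A → Fin S → Fin A → Fin A → ℝ) : ℝ :=
  sSup {x | ∃ k i, i ≠ istar k ∧
    x = v.cost (w k i (istar k)) / (v.gap istar k i) ^ 2}

/-- The DP hardness parameter `H_DP^{(ε,δ)}(v)`. -/
noncomputable def HDP (v : Inst S A d) (istar : Fin S → Fin A)
    (w : Fin S → Fin A → Fin A → Fin S → Fin A → Fin A → ℝ) (ε δ : ℝ) : ℝ :=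
  sSup {x | ∃ k i, i ≠ istar k ∧
    x = Real.sqrt (Real.log (1.25 / δ) * v.gammaDP (w k i (istar k))) /
        (Real.sqrt ε * v.gap istar k i)}

/-- The empirical success proportion `B_{k,i,j}` computed from counts `y`. -/
noncomputable def B (v : Inst S A d) (n : ℕ) (y : Fin S → Fin A → Fin A → ℕ)
    (k : Fin S) (i j : Fin A) : ℝ :=
  if 0 < v.N k i j then (y k i j : ℝ) / (n * v.N k i j) else 0

/-- The RL-LOW relative reward estimate `r̂_{k,i,j}` computed from counts `y`. -/
noncomputable def rhat (v : Inst S A d) (L : ℝ) (n : ℕ)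
    (w : Fin S → Fin A → Fin A → Fin S → Fin A → Fin A → ℝ)
    (y : Fin S → Fin A → Fin A → ℕ) (k : Fin S) (i j : Fin A) : ℝ :=
  if i = j then 0 else
    ∑ k', ∑ i', ∑ j', w k i j k' i' j' * logit (clip L (v.B n y k' i' j'))

/-- The DP-RL-LOW private relative reward estimate `r̃_{k,i,j}` computed from counts `y`
and Gaussian noise realizations `z`. -/
noncomputable def rtilde (v : Inst S A d) (L : ℝ) (n : ℕ)
    (w : Fin S → Fin A → Fin A → Fin S → Fin A → Fin A → ℝ)
    (y : Fin S → Fin A → Fin A → ℕ) (z : Fin S → Fin A → Fin A → ℝ)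
    (k : Fin S) (i j : Fin A) : ℝ :=
  if i = j then 0 else
    ∑ k', ∑ i', ∑ j', w k i j k' i' j' *
      logit (clip L
        (if 0 < v.N k' i' j' then
          (y k' i' j' : ℝ) / (n * v.N k' i' j') + z k' i' j' else 0))

/-- Simple regret of the action assignment `ihat` (using the best actions `istar`). -/
noncomputable def regret (v : Inst S A d) (istar : Fin S → Fin A)
    (ihat : Fin S → Fin A) : ℝ :=
  ∑ k, v.ρ k * (v.r k (istar k) - v.r k (ihat k))

/-- Simple regret of the action assignment `ihat` (via suprema of rewards; this does not
require the best action to be unique). -/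
noncomputable def regretSup (v : Inst S A d) (ihat : Fin S → Fin A) : ℝ :=
  ∑ k, v.ρ k * ((⨆ j, v.r k j) - v.r k (ihat k))

end Inst

/-- `Y` has the binomial law with `m` trials and success probability `p` under `P`. -/
def HasBinomialLaw {Ω : Type*} [MeasurableSpace Ω] (P : Measure Ω)
    (Y : Ω → ℕ) (m : ℕ) (p : ℝ) : Prop :=
  ∀ t : ℕ, P {ω | Y ω = t} =
    ENNReal.ofReal ((m.choose t : ℝ) * p ^ t * (1 - p) ^ (m - t))

/-- The data model of offline RLHF with pairwise comparisons: for each triple `(k,i,j)`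
with `N_{k,i,j} > 0`, the count `Y k i j` is binomial with `n·N_{k,i,j}` trials and
success probability `σ(r_{k,i} − r_{k,j})`, and these counts are independent. -/
def IsBTLSample {S A d : ℕ} (v : Inst S A d) (n : ℕ) {Ω : Type*} [MeasurableSpace Ω]
    (P : Measure Ω) (Y : Fin S → Fin A → Fin A → Ω → ℕ) : Prop :=
  (∀ k i j, Measurable (Y k i j)) ∧
  (∀ k i j, 0 < v.N k i j →
    HasBinomialLaw P (Y k i j) ⌈(n : ℝ) * v.N k i j⌉₊
      (sigmoid (v.r k i - v.r k j))) ∧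
  iIndepFun (m := fun _ => (inferInstance : MeasurableSpace ℝ))
    (fun (t : {t : Fin S × Fin A × Fin A // 0 < v.N t.1 t.2.1 t.2.2}) =>
      fun ω => (Y t.1.1 t.1.2.1 t.1.2.2 ω : ℝ)) P

/-- The data model of DP-RL-LOW: on top of the BTL counts, for each triple with
`N_{k,i,j} > 0` there is Gaussian noise `ξ k i j` of mean `0` and variance
`2·log(1.25/δ)/(ε·n·N_{k,i,j})²`, and all counts and noises are jointly independent. -/
def IsDPSample {S A d : ℕ} (v : Inst S A d) (n : ℕ) (ε δ : ℝ) {Ω : Type*}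
    [MeasurableSpace Ω] (P : Measure Ω)
    (Y : Fin S → Fin A → Fin A → Ω → ℕ) (ξ : Fin S → Fin A → Fin A → Ω → ℝ) : Prop :=
  (∀ k i j, Measurable (Y k i j)) ∧
  (∀ k i j, Measurable (ξ k i j)) ∧
  (∀ k i j, 0 < v.N k i j →
    HasBinomialLaw P (Y k i j) ⌈(n : ℝ) * v.N k i j⌉₊
      (sigmoid (v.r k i - v.r k j))) ∧
  (∀ k i j, 0 < v.N k i j →
    P.map (ξ k i j) =
      gaussianReal 0
        (Real.toNNReal (2 * Real.log (1.25 / δ) / (ε * n * v.N k i j) ^ 2))) ∧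
  iIndepFun (m := fun _ => (inferInstance : MeasurableSpace ℝ))
    (fun (t : {t : Fin S × Fin A × Fin A // 0 < v.N t.1 t.2.1 t.2.2} ⊕
              {t : Fin S × Fin A × Fin A // 0 < v.N t.1 t.2.1 t.2.2}) =>
      Sum.elim
        (fun t => fun ω => (Y t.1.1 t.1.2.1 t.1.2.2 ω : ℝ))
        (fun t => ξ t.1.1 t.1.2.1 t.1.2.2) t) P

end RLHF

open RLHF

/- ===================== Auxiliary lemmas ===================== -/

section AuxReal

lemma RLHF.exp_le_add_exp_sq (x : ℝ) : Real.exp x ≤ x + Real.exp (x^2) := by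
  rcases le_or_gt (|x|) 1 with h | h
  · have hb := Real.exp_bound h (by norm_num : 0 < 2)
    have hs : ∑ i ∈ Finset.range 2, x ^ i / (Nat.factorial i : ℝ) = 1 + x := by
      simp [Finset.sum_range_succ, Nat.factorial]
    rw [hs] at hb
    have h2 : Real.exp x - (1 + x) ≤ |x| ^ 2 * ((Nat.succ 2 : ℝ) / ((Nat.factorial 2 : ℝ) * 2)) :=
      (abs_le.1 hb).2
    have h3 : |x| ^ 2 * ((Nat.succ 2 : ℝ) / ((Nat.factorial 2 : ℝ) * 2)) ≤ x^2 := by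
      rw [sq_abs]
      have : ((Nat.succ 2 : ℝ) / ((Nat.factorial 2 : ℝ) * 2)) = 3/4 := by
        norm_num [Nat.factorial]
      rw [this]; nlinarith [sq_nonneg x]
    have h4 : (1:ℝ) + x^2 ≤ Real.exp (x^2) := by
      have := Real.add_one_le_exp (x^2); linarith
    linarith
  · rcases le_or_gt 0 x with hx | hx
    · have h1 : x ≤ x^2 := by nlinarith [abs_of_nonneg hx ▸ h]
      have := Real.exp_le_exp.2 h1
      linarith
    · have hx1 : 1 < -x := by rwa [abs_of_neg hx] at h
      have h1 : -x ≤ x^2 := by nlinarith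
      have h2 : Real.exp x - x ≤ 1 - x := by
        have : Real.exp x ≤ 1 := by
          rw [show (1:ℝ) = Real.exp 0 by simp]
          exact Real.exp_le_exp.2 hx.le
        linarith
      have h3 : (1:ℝ) - x ≤ Real.exp (-x) := by
        have := Real.add_one_le_exp (-x); linarith
      have h4 : Real.exp (-x) ≤ Real.exp (x^2) := Real.exp_le_exp.2 h1
      linarith

lemma RLHF.bern_mgf (p s : ℝ) (hp0 : 0 ≤ p) (hp1 : p ≤ 1) :
    Real.exp (-(s*p)) * ((1-p) + p * Real.exp s) ≤ Real.exp (s^2) := by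
  have e1 : Real.exp (-(s*p)) * ((1-p) + p * Real.exp s)
      = (1-p) * Real.exp (-(s*p)) + p * Real.exp (s*(1-p)) := by
    have : Real.exp (-(s*p)) * Real.exp s = Real.exp (s*(1-p)) := by
      rw [← Real.exp_add]; ring_nf
    nlinarith [this]
  rw [e1]
  have h1 := RLHF.exp_le_add_exp_sq (-(s*p))
  have h2 := RLHF.exp_le_add_exp_sq (s*(1-p))
  have hq : 0 ≤ 1 - p := by linarith
  have b1 : Real.exp ((-(s*p))^2) ≤ Real.exp (s^2) := by
    apply Real.exp_le_exp.2; nlinarith [sq_nonneg s, sq_nonneg (s*p)]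
  have b2 : Real.exp ((s*(1-p))^2) ≤ Real.exp (s^2) := by
    apply Real.exp_le_exp.2; nlinarith [sq_nonneg s, sq_nonneg (s*(1-p))]
  calc (1-p) * Real.exp (-(s*p)) + p * Real.exp (s*(1-p))
      ≤ (1-p) * (-(s*p) + Real.exp (s^2)) + p * (s*(1-p) + Real.exp (s^2)) := by
        apply add_le_add
        · exact mul_le_mul_of_nonneg_left (h1.trans (by nlinarith)) hq
        · exact mul_le_mul_of_nonneg_left (h2.trans (by nlinarith)) hp0
    _ = Real.exp (s^2) := by ring

end AuxReal

section LogitClip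
variable {L : ℝ}

lemma RLHF.one_add_exp_pos (x : ℝ) : (0:ℝ) < 1 + Real.exp x := by positivity

lemma RLHF.a0_pos : (0:ℝ) < 1 / (1 + Real.exp (2*L)) := by positivity

lemma RLHF.one_le_exp_2L (hL : 0 ≤ L) : (1:ℝ) ≤ Real.exp (2*L) := by
  rw [show (1:ℝ) = Real.exp 0 by simp]
  exact Real.exp_le_exp.2 (by linarith)

lemma RLHF.a0_le_a1 (hL : 0 ≤ L) :
    1 / (1 + Real.exp (2*L)) ≤ Real.exp (2*L) / (1 + Real.exp (2*L)) := by
  have h := RLHF.one_le_exp_2L hL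
  have h2 := RLHF.one_add_exp_pos (2*L)
  exact div_le_div_of_nonneg_right h h2.le

lemma RLHF.a1_lt_one : Real.exp (2*L) / (1 + Real.exp (2*L)) < 1 := by
  rw [div_lt_one (RLHF.one_add_exp_pos _)]; linarith [Real.exp_pos (2*L)]

lemma RLHF.one_sub_a1 :
    1 - Real.exp (2*L) / (1 + Real.exp (2*L)) = 1 / (1 + Real.exp (2*L)) := by
  field_simp; ring

lemma RLHF.clip_mem (hL : 0 ≤ L) (x : ℝ) :
    1 / (1 + Real.exp (2*L)) ≤ clip L x ∧ clip L x ≤ Real.exp (2*L) / (1 + Real.exp (2*L)) :=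
  ⟨le_max_left _ _, max_le (RLHF.a0_le_a1 hL) (min_le_left _ _)⟩

lemma RLHF.clip_of_mem {x : ℝ} (h0 : 1 / (1 + Real.exp (2*L)) ≤ x)
    (h1 : x ≤ Real.exp (2*L) / (1 + Real.exp (2*L))) : clip L x = x := by
  rw [clip, min_eq_right h1, max_eq_right h0]

lemma RLHF.clip_lipschitz (x y : ℝ) : |clip L x - clip L y| ≤ |x - y| := by
  set a1 := Real.exp (2*L)/(1+Real.exp (2*L))
  set a0 := 1/(1+Real.exp (2*L))
  have h1 : |min a1 x - min a1 y| ≤ |x - y| := by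
    have := abs_min_sub_min_le_max a1 x a1 y
    simpa using this
  have h2 : |max a0 (min a1 x) - max a0 (min a1 y)| ≤ |min a1 x - min a1 y| := by
    have := abs_max_sub_max_le_max a0 (min a1 x) a0 (min a1 y)
    simpa using this
  exact h2.trans h1

lemma RLHF.sigmoid_mem (hL : 0 ≤ L) {x : ℝ} (hx : |x| ≤ 2*L) :
    1 / (1 + Real.exp (2*L)) ≤ sigmoid x
      ∧ sigmoid x ≤ Real.exp (2*L) / (1 + Real.exp (2*L)) := by
  obtain ⟨hx1, hx2⟩ := abs_le.1 hx
  constructor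
  · rw [sigmoid, div_le_div_iff₀ (RLHF.one_add_exp_pos _) (RLHF.one_add_exp_pos _)]
    have h1 : Real.exp (-(2*L)) ≤ Real.exp x := Real.exp_le_exp.2 (by linarith)
    have h2 : Real.exp (-(2*L)) * Real.exp (2*L) = 1 := by
      rw [← Real.exp_add]; simp
    nlinarith [Real.exp_pos x, Real.exp_pos (2*L)]
  · rw [sigmoid, div_le_div_iff₀ (RLHF.one_add_exp_pos _) (RLHF.one_add_exp_pos _)]
    have h1 : Real.exp x ≤ Real.exp (2*L) := Real.exp_le_exp.2 (by linarith)
    nlinarith [Real.exp_pos x, Real.exp_pos (2*L)]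

lemma RLHF.one_sub_sigmoid (x : ℝ) : 1 - sigmoid x = 1 / (1 + Real.exp x) := by
  rw [sigmoid]; field_simp; ring

lemma RLHF.sigmoid_pos (x : ℝ) : 0 < sigmoid x := by
  rw [sigmoid]; positivity

lemma RLHF.sigmoid_lt_one (x : ℝ) : sigmoid x < 1 := by
  rw [sigmoid, div_lt_one (RLHF.one_add_exp_pos _)]; linarith [Real.exp_pos x]

lemma RLHF.logit_sigmoid (x : ℝ) : logit (sigmoid x) = x := by
  rw [logit, RLHF.one_sub_sigmoid, sigmoid]
  have h := RLHF.one_add_exp_pos x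
  have : Real.exp x / (1 + Real.exp x) / (1 / (1 + Real.exp x)) = Real.exp x := by
    field_simp
  rw [this, Real.log_exp]

lemma RLHF.log_lip {c x y : ℝ} (hc : 0 < c) (hx : c ≤ x) (hy : c ≤ y) :
    |Real.log x - Real.log y| ≤ |x - y| / c := by
  wlog hxy : y ≤ x generalizing x y
  · rw [abs_sub_comm, abs_sub_comm x y]; exact this hy hx (le_of_not_ge hxy)
  have hypos : 0 < y := hc.trans_le hy
  have hxpos : 0 < x := hc.trans_le hx
  rw [abs_of_nonneg (by nlinarith [Real.log_le_log hypos hxy] : (0:ℝ) ≤ Real.log x - Real.log y),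
      abs_of_nonneg (by linarith : (0:ℝ) ≤ x - y)]
  have h1 : Real.log x - Real.log y = Real.log (x / y) := by
    rw [Real.log_div hxpos.ne' hypos.ne']
  rw [h1]
  have h2 : Real.log (x / y) ≤ x / y - 1 := Real.log_le_sub_one_of_pos (by positivity)
  have h3 : x / y - 1 = (x - y) / y := by field_simp
  have h4 : (x - y) / y ≤ (x - y) / c := by
    apply div_le_div_of_nonneg_left (by linarith) hc hy
  linarith

lemma RLHF.logit_lip (hL : 0 ≤ L) {x y : ℝ}
    (hx0 : 1 / (1 + Real.exp (2*L)) ≤ x) (hx1 : x ≤ Real.exp (2*L) / (1 + Real.exp (2*L)))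
    (hy0 : 1 / (1 + Real.exp (2*L)) ≤ y) (hy1 : y ≤ Real.exp (2*L) / (1 + Real.exp (2*L))) :
    |logit x - logit y| ≤ (2 * (1 + Real.exp (2*L))) * |x - y| := by
  have ha0 : (0:ℝ) < 1 / (1 + Real.exp (2*L)) := RLHF.a0_pos
  have hxpos : 0 < x := ha0.trans_le hx0
  have hypos : 0 < y := ha0.trans_le hy0
  have hx1' : 1 / (1 + Real.exp (2*L)) ≤ 1 - x := by
    rw [← RLHF.one_sub_a1 (L := L)]; linarith
  have hy1' : 1 / (1 + Real.exp (2*L)) ≤ 1 - y := by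
    rw [← RLHF.one_sub_a1 (L := L)]; linarith
  have hlogit : ∀ z : ℝ, 0 < z → z < 1 → logit z = Real.log z - Real.log (1 - z) := by
    intro z h0 h1
    rw [logit, Real.log_div h0.ne' (by linarith)]
  have hxlt1 : x < 1 := lt_of_le_of_lt hx1 RLHF.a1_lt_one
  have hylt1 : y < 1 := lt_of_le_of_lt hy1 RLHF.a1_lt_one
  rw [hlogit x hxpos hxlt1, hlogit y hypos hylt1]
  have h1 := RLHF.log_lip ha0 hx0 hy0
  have h2 := RLHF.log_lip ha0 hx1' hy1'
  have h3 : |(1 - x) - (1 - y)| = |x - y| := by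
    rw [show (1-x)-(1-y) = -(x-y) by ring, abs_neg]
  rw [h3] at h2
  have hc : |x - y| / (1 / (1 + Real.exp (2*L))) = (1 + Real.exp (2*L)) * |x - y| := by
    field_simp
  rw [hc] at h1 h2
  calc |Real.log x - Real.log (1-x) - (Real.log y - Real.log (1-y))|
      ≤ |Real.log x - Real.log y| + |Real.log (1-x) - Real.log (1-y)| := by
        rw [show Real.log x - Real.log (1-x) - (Real.log y - Real.log (1-y))
          = (Real.log x - Real.log y) - (Real.log (1-x) - Real.log (1-y)) by ring]
        exact abs_sub _ _
    _ ≤ (1 + Real.exp (2*L)) * |x - y| + (1 + Real.exp (2*L)) * |x - y| := add_le_add h1 h2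
    _ = (2 * (1 + Real.exp (2*L))) * |x - y| := by ring

lemma RLHF.key_lip (hL : 0 ≤ L) {b x : ℝ} (hx : |x| ≤ 2*L) :
    |logit (clip L b) - x| ≤ (2 * (1 + Real.exp (2*L))) * |b - sigmoid x| := by
  obtain ⟨hs0, hs1⟩ := RLHF.sigmoid_mem hL hx
  have hcs : clip L (sigmoid x) = sigmoid x := RLHF.clip_of_mem hs0 hs1
  obtain ⟨hb0, hb1⟩ := RLHF.clip_mem hL (L := L) b
  have h1 : |logit (clip L b) - logit (sigmoid x)|
      ≤ (2 * (1 + Real.exp (2*L))) * |clip L b - sigmoid x| :=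
    RLHF.logit_lip hL hb0 hb1 hs0 hs1
  rw [RLHF.logit_sigmoid] at h1
  have h2 : |clip L b - sigmoid x| ≤ |b - sigmoid x| := by
    calc |clip L b - sigmoid x| = |clip L b - clip L (sigmoid x)| := by rw [hcs]
      _ ≤ |b - sigmoid x| := RLHF.clip_lipschitz b (sigmoid x)
  exact h1.trans (by
    apply mul_le_mul_of_nonneg_left h2
    positivity)

end LogitClip

section Binom
variable {Ω : Type*} [MeasurableSpace Ω] {P : Measure Ω} {Y : Ω → ℕ} {m : ℕ} {p : ℝ}

lemma RLHF.HasBinomialLaw.ae_le (hY : HasBinomialLaw P Y m p) : ∀ᵐ ω ∂P, Y ω ≤ m := by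
  have h : P {ω | ¬ (Y ω ≤ m)} = 0 := by
    have hset : {ω | ¬ (Y ω ≤ m)} = ⋃ t : ℕ, {ω | Y ω = m + 1 + t} := by
      ext ω
      simp only [Set.mem_setOf_eq, Set.mem_iUnion, not_le]
      constructor
      · intro h; exact ⟨Y ω - (m+1), by omega⟩
      · rintro ⟨t, ht⟩; omega
    rw [hset]
    apply measure_iUnion_null
    intro t
    rw [hY (m + 1 + t), Nat.choose_eq_zero_of_lt (by omega)]
    simp
  exact h

lemma RLHF.HasBinomialLaw.integral_eq [IsFiniteMeasure P] (hmeas : Measurable Y)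
    (hY : HasBinomialLaw P Y m p) (hp0 : 0 ≤ p) (hp1 : p ≤ 1) (g : ℕ → ℝ) :
    ∫ ω, g (Y ω) ∂P =
      ∑ y ∈ Finset.range (m+1), ((m.choose y : ℝ) * p ^ y * (1-p) ^ (m-y)) * g y := by
  have hmes : ∀ y : ℕ, MeasurableSet {ω | Y ω = y} := fun y => hmeas (measurableSet_singleton y)
  have hae : (fun ω => g (Y ω)) =ᵐ[P]
      (fun ω => ∑ y ∈ Finset.range (m+1),
        Set.indicator {ω' | Y ω' = y} (fun _ => g y) ω) := by
    filter_upwards [RLHF.HasBinomialLaw.ae_le hY] with ω hω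
    rw [Finset.sum_congr rfl (fun y _ => Set.indicator_apply _ _ _)]
    simp only [Set.mem_setOf_eq]
    rw [Finset.sum_ite_eq (Finset.range (m+1)) (Y ω) (fun y => g y)]
    simp [Nat.lt_succ_of_le hω]
  rw [integral_congr_ae hae, integral_finset_sum]
  · apply Finset.sum_congr rfl
    intro y _
    rw [integral_indicator_const _ (hmes y), measureReal_def, hY y, smul_eq_mul,
        ENNReal.toReal_ofReal (by
          have h1 : (0:ℝ) ≤ 1 - p := by linarith
          positivity), mul_comm]
  · intro y _
    exact (integrable_const (g y)).indicator (hmes y)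

lemma RLHF.binom_sum_exp (m : ℕ) (p s : ℝ) :
    ∑ y ∈ Finset.range (m+1),
        ((m.choose y : ℝ) * p ^ y * (1-p) ^ (m-y)) * Real.exp (s * y)
      = ((1-p) + p * Real.exp s) ^ m := by
  rw [add_comm (1-p) (p * Real.exp s), add_pow]
  apply Finset.sum_congr rfl
  intro y _
  rw [mul_pow, ← Real.exp_nat_mul]
  ring_nf

lemma RLHF.binom_mgf_le [IsProbabilityMeasure P] (hmeas : Measurable Y)
    (hY : HasBinomialLaw P Y m p) (hp0 : 0 ≤ p) (hp1 : p ≤ 1) (hm : 0 < m) (c : ℝ) :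
    ∫ ω, Real.exp (c * ((Y ω : ℝ) / m - p)) ∂P ≤ Real.exp (c^2 / m) := by
  have hm' : (0:ℝ) < m := by exact_mod_cast hm
  set s := c / m with hs
  have hms : (m:ℝ) * s = c := by rw [hs]; field_simp
  have hrw : ∀ y : ℕ, Real.exp (c * ((y : ℝ) / m - p))
      = Real.exp (-(s * p)) ^ m * Real.exp (s * y) := by
    intro y
    rw [← Real.exp_nat_mul, ← Real.exp_add]
    congr 1
    field_simp [hs]
    linear_combination (-(y:ℝ) + m*p) * hms
  rw [RLHF.HasBinomialLaw.integral_eq hmeas hY hp0 hp1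
    (fun y => Real.exp (c * ((y : ℝ) / m - p)))]
  have heq : ∑ y ∈ Finset.range (m+1),
        ((m.choose y : ℝ) * p ^ y * (1-p) ^ (m-y)) * Real.exp (c * ((y:ℝ)/m - p))
      = Real.exp (-(s*p)) ^ m * (((1-p) + p * Real.exp s) ^ m) := by
    rw [← RLHF.binom_sum_exp m p s, Finset.mul_sum]
    apply Finset.sum_congr rfl
    intro y _
    rw [hrw y]; ring
  rw [heq, ← mul_pow]
  calc (Real.exp (-(s*p)) * ((1-p) + p * Real.exp s)) ^ m
      ≤ (Real.exp (s^2)) ^ m := by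
        apply pow_le_pow_left₀ ?_ (RLHF.bern_mgf p s hp0 hp1)
        have h1 : (0:ℝ) ≤ 1 - p := by linarith
        positivity
    _ = Real.exp (c^2 / m) := by
        rw [← Real.exp_nat_mul]
        congr 1
        field_simp [hs]
        linear_combination ((m:ℝ)*s + c) * hms

lemma RLHF.abs_unit [IsProbabilityMeasure P]
    (hY : HasBinomialLaw P Y m p) (hp0 : 0 ≤ p) (hp1 : p ≤ 1) (hm : 0 < m) :
    ∀ᵐ ω ∂P, |(Y ω : ℝ) / m - p| ≤ 1 := by
  filter_upwards [RLHF.HasBinomialLaw.ae_le hY] with ω hω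
  have hm' : (0:ℝ) < m := by exact_mod_cast hm
  have h1 : (0:ℝ) ≤ (Y ω : ℝ) / m := by positivity
  have h2 : (Y ω : ℝ) / m ≤ 1 := by
    rw [div_le_one hm']
    exact_mod_cast hω
  rw [abs_le]; constructor <;> nlinarith

lemma RLHF.integrable_exp_lin [IsProbabilityMeasure P] (hmeas : Measurable Y)
    (hY : HasBinomialLaw P Y m p) (hp0 : 0 ≤ p) (hp1 : p ≤ 1) (hm : 0 < m) (c : ℝ) :
    Integrable (fun ω => Real.exp (c * ((Y ω : ℝ) / m - p))) P := by
  apply Integrable.mono' (integrable_const (Real.exp |c|))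
  · apply Measurable.aestronglyMeasurable
    fun_prop
  · filter_upwards [RLHF.abs_unit hY hp0 hp1 hm] with ω hω
    rw [Real.norm_eq_abs, abs_of_pos (Real.exp_pos _)]
    apply Real.exp_le_exp.2
    calc c * ((Y ω : ℝ)/m - p) ≤ |c * ((Y ω : ℝ)/m - p)| := le_abs_self _
      _ = |c| * |(Y ω : ℝ)/m - p| := abs_mul _ _
      _ ≤ |c| * 1 := mul_le_mul_of_nonneg_left hω (abs_nonneg _)
      _ = |c| := mul_one _

lemma RLHF.integrable_exp_abs [IsProbabilityMeasure P] (hmeas : Measurable Y)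
    (hY : HasBinomialLaw P Y m p) (hp0 : 0 ≤ p) (hp1 : p ≤ 1) (hm : 0 < m) (t a : ℝ) :
    Integrable (fun ω => Real.exp (t * (a * |(Y ω : ℝ) / m - p|))) P := by
  apply Integrable.mono' (integrable_const (Real.exp |t * a|))
  · apply Measurable.aestronglyMeasurable
    fun_prop
  · filter_upwards [RLHF.abs_unit hY hp0 hp1 hm] with ω hω
    rw [Real.norm_eq_abs, abs_of_pos (Real.exp_pos _)]
    apply Real.exp_le_exp.2
    calc t * (a * |(Y ω : ℝ)/m - p|) ≤ |t * (a * |(Y ω : ℝ)/m - p|)| := le_abs_self _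
      _ = |t * a| * |(Y ω : ℝ)/m - p| := by rw [abs_mul, abs_mul, abs_abs, abs_mul, mul_assoc]
      _ ≤ |t * a| * 1 := mul_le_mul_of_nonneg_left hω (abs_nonneg _)
      _ = |t * a| := mul_one _

lemma RLHF.mgf_abs_le [IsProbabilityMeasure P] (hmeas : Measurable Y)
    (hY : HasBinomialLaw P Y m p) (hp0 : 0 ≤ p) (hp1 : p ≤ 1) (hm : 0 < m)
    {t a : ℝ} (ht : 0 ≤ t) (ha : 0 ≤ a) :
    mgf (fun ω => a * |(Y ω : ℝ) / m - p|) P t ≤ 2 * Real.exp ((t*a)^2 / m) := by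
  rw [mgf]
  have hpt : ∀ ω : Ω, Real.exp (t * (a * |(Y ω : ℝ)/m - p|))
      ≤ Real.exp ((t*a) * ((Y ω : ℝ)/m - p)) + Real.exp ((-(t*a)) * ((Y ω : ℝ)/m - p)) := by
    intro ω
    set u := (Y ω : ℝ)/m - p
    have hta : 0 ≤ t * a := mul_nonneg ht ha
    rcases abs_cases u with ⟨h1, _⟩ | ⟨h1, _⟩
    · rw [show t * (a * |u|) = (t*a) * u by rw [h1]; ring]
      linarith [Real.exp_pos ((-(t*a)) * u)]
    · rw [show t * (a * |u|) = (-(t*a)) * u by rw [h1]; ring]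
      linarith [Real.exp_pos ((t*a) * u)]
  calc ∫ ω, Real.exp (t * (a * |(Y ω : ℝ)/m - p|)) ∂P
      ≤ ∫ ω, (Real.exp ((t*a) * ((Y ω : ℝ)/m - p))
            + Real.exp ((-(t*a)) * ((Y ω : ℝ)/m - p))) ∂P := by
        apply integral_mono (RLHF.integrable_exp_abs hmeas hY hp0 hp1 hm t a)
          (Integrable.add (RLHF.integrable_exp_lin hmeas hY hp0 hp1 hm _)
            (RLHF.integrable_exp_lin hmeas hY hp0 hp1 hm _))
        intro ω; exact hpt ω
    _ = (∫ ω, Real.exp ((t*a) * ((Y ω : ℝ)/m - p)) ∂P)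
        + ∫ ω, Real.exp ((-(t*a)) * ((Y ω : ℝ)/m - p)) ∂P :=
        integral_add (RLHF.integrable_exp_lin hmeas hY hp0 hp1 hm _)
          (RLHF.integrable_exp_lin hmeas hY hp0 hp1 hm _)
    _ ≤ Real.exp ((t*a)^2 / m) + Real.exp ((t*a)^2 / m) := by
        apply add_le_add
        · exact RLHF.binom_mgf_le hmeas hY hp0 hp1 hm (t*a)
        · have := RLHF.binom_mgf_le hmeas hY hp0 hp1 hm (-(t*a))
          rwa [neg_sq] at this
    _ = 2 * Real.exp ((t*a)^2 / m) := by ring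

end Binom

section InstAux

variable {S A d : ℕ}

lemma RLHF.rdiff_eq (v : Inst S A d) {k : Fin S} {i j : Fin A}
    {u : Fin S → Fin A → Fin A → ℝ} (hu : v.Feasible k i j u) :
    v.r k i - v.r k j = ∑ k', ∑ i', ∑ j', u k' i' j' * (v.r k' i' - v.r k' j') := by
  have h1 : v.r k i - v.r k j = @inner ℝ _ _ (v.φ k i - v.φ k j) v.θ := by
    rw [inner_sub_left]; rfl
  rw [h1, hu.2, sum_inner]
  apply Finset.sum_congr rfl
  intro a _
  rw [sum_inner]
  apply Finset.sum_congr rfl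
  intro b _
  rw [sum_inner]
  apply Finset.sum_congr rfl
  intro c _
  rw [real_inner_smul_left, inner_sub_left]
  rfl

lemma RLHF.sum_subtype_triple (N : Fin S → Fin A → Fin A → ℝ)
    (g : Fin S × Fin A × Fin A → ℝ) :
    ∑ t : {t : Fin S × Fin A × Fin A // 0 < N t.1 t.2.1 t.2.2}, g t.1
      = ∑ k', ∑ i', ∑ j', if 0 < N k' i' j' then g (k', i', j') else 0 := by
  classical
  have h1 : ∑ k', ∑ i', ∑ j', (if 0 < N k' i' j' then g (k', i', j') else 0)
      = ∑ x : Fin S × Fin A × Fin A, if 0 < N x.1 x.2.1 x.2.2 then g x else 0 := by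
    rw [Fintype.sum_prod_type]
    apply Finset.sum_congr rfl
    intro a _
    rw [Fintype.sum_prod_type]
  rw [h1, ← Finset.sum_filter]
  exact (Finset.sum_subtype _ (by simp) g).symm

/-- The deterministic implication: a wrong sign of `r̂` forces a large weighted deviation. -/
lemma RLHF.chain_bound (v : Inst S A d) {L : ℝ} (hL : 0 < L)
    (hr : ∀ k i, |v.r k i| ≤ L) (n : ℕ)
    {k : Fin S} {i j : Fin A}
    {w0 : Fin S → Fin A → Fin A → ℝ} (hfeas : v.Feasible k i j w0)
    (y : Fin S → Fin A → Fin A → ℕ)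
    (h0 : 0 ≤ ∑ k', ∑ i', ∑ j', w0 k' i' j' * logit (clip L (v.B n y k' i' j'))) :
    v.r k j - v.r k i ≤ ∑ k', ∑ i', ∑ j',
      (if 0 < v.N k' i' j' then
        (2 * (1 + Real.exp (2*L))) * |w0 k' i' j'| *
          |v.B n y k' i' j' - sigmoid (v.r k' i' - v.r k' j')| else 0) := by
  have hid := RLHF.rdiff_eq v hfeas
  have key : (∑ k', ∑ i', ∑ j', w0 k' i' j' * logit (clip L (v.B n y k' i' j')))
      - (∑ k', ∑ i', ∑ j', w0 k' i' j' * (v.r k' i' - v.r k' j'))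
      ≤ ∑ k', ∑ i', ∑ j',
        (if 0 < v.N k' i' j' then
          (2 * (1 + Real.exp (2*L))) * |w0 k' i' j'| *
            |v.B n y k' i' j' - sigmoid (v.r k' i' - v.r k' j')| else 0) := by
    rw [← Finset.sum_sub_distrib]
    apply Finset.sum_le_sum
    intro a _
    rw [← Finset.sum_sub_distrib]
    apply Finset.sum_le_sum
    intro b _
    rw [← Finset.sum_sub_distrib]
    apply Finset.sum_le_sum
    intro c _
    by_cases hN : 0 < v.N a b c
    · rw [if_pos hN]
      have habs : |v.r a b - v.r a c| ≤ 2 * L := by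
        have h1 := hr a b
        have h2 := hr a c
        rw [abs_le] at h1 h2 ⊢
        constructor <;> linarith
      have hkl := RLHF.key_lip (L := L) hL.le (b := v.B n y a b c) habs
      calc w0 a b c * logit (clip L (v.B n y a b c)) - w0 a b c * (v.r a b - v.r a c)
          = w0 a b c * (logit (clip L (v.B n y a b c)) - (v.r a b - v.r a c)) := by ring
        _ ≤ |w0 a b c * (logit (clip L (v.B n y a b c)) - (v.r a b - v.r a c))| :=
            le_abs_self _
        _ = |w0 a b c| * |logit (clip L (v.B n y a b c)) - (v.r a b - v.r a c)| :=
            abs_mul _ _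
        _ ≤ |w0 a b c| * ((2 * (1 + Real.exp (2*L)))
              * |v.B n y a b c - sigmoid (v.r a b - v.r a c)|) :=
            mul_le_mul_of_nonneg_left hkl (abs_nonneg _)
        _ = (2 * (1 + Real.exp (2*L))) * |w0 a b c|
              * |v.B n y a b c - sigmoid (v.r a b - v.r a c)| := by ring
    · rw [if_neg hN]
      have hz : w0 a b c = 0 := by
        apply hfeas.1
        have := v.N_nonneg a b c
        cases' (lt_or_eq_of_le this) with h h
        · exact absurd h hN
        · exact h.symm
      rw [hz]; simp
  linarith

/-- Positivity of the cost of a feasible weight vector. -/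
lemma RLHF.cost_pos (v : Inst S A d) {k : Fin S} {i j : Fin A} (hij : i ≠ j)
    {u : Fin S → Fin A → Fin A → ℝ} (hu : v.Feasible k i j u) :
    0 < v.cost u := by
  have hnn : ∀ a b c, (0:ℝ) ≤ (if 0 < v.N a b c then (u a b c)^2 / v.N a b c else 0) := by
    intro a b c
    split
    · positivity
    · exact le_refl 0
  rw [Inst.cost]
  rcases lt_or_eq_of_le (Finset.sum_nonneg fun a _ => Finset.sum_nonneg fun b _ =>
      Finset.sum_nonneg fun c _ => hnn a b c) with h | h
  · exact h
  exfalso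
  have hzero : ∀ a b c, u a b c = 0 := by
    have h1 := (Finset.sum_eq_zero_iff_of_nonneg (fun a _ => Finset.sum_nonneg fun b _ =>
        Finset.sum_nonneg fun c _ => hnn a b c)).1 h.symm
    intro a b c
    have h2 := (Finset.sum_eq_zero_iff_of_nonneg (fun b _ =>
        Finset.sum_nonneg fun c _ => hnn a b c)).1 (h1 a (Finset.mem_univ a)) b
        (Finset.mem_univ b)
    have h3 := (Finset.sum_eq_zero_iff_of_nonneg (fun c _ => hnn a b c)).1 h2 c
        (Finset.mem_univ c)
    by_cases hN : 0 < v.N a b c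
    · rw [if_pos hN] at h3
      have := div_eq_zero_iff.1 h3
      rcases this with h4 | h4
      · exact pow_eq_zero_iff (by norm_num) |>.1 h4
      · exact absurd h4 hN.ne'
    · apply hu.1
      have := v.N_nonneg a b c
      cases' (lt_or_eq_of_le this) with hh hh
      · exact absurd hh hN
      · exact hh.symm
  have hfe := hu.2
  rw [Finset.sum_eq_zero (fun a _ => Finset.sum_eq_zero (fun b _ => Finset.sum_eq_zero
      (fun c _ => by rw [hzero a b c, zero_smul])))] at hfe
  have : v.φ k i = v.φ k j := sub_eq_zero.1 hfe
  exact v.φ_ne k i j hij this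

end InstAux

section Chernoff

variable {S A d : ℕ}

lemma RLHF.chernoff (v : Inst S A d) (n : ℕ) {Ω : Type} [MeasurableSpace Ω]
    (P : Measure Ω) [IsProbabilityMeasure P]
    (Y : Fin S → Fin A → Fin A → Ω → ℕ) (hbtl : IsBTLSample v n P Y)
    (m : {t : Fin S × Fin A × Fin A // 0 < v.N t.1 t.2.1 t.2.2} → ℕ)
    (hm : ∀ t, 0 < m t)
    (hmr : ∀ t, (m t : ℝ) = n * v.N t.1.1 t.1.2.1 t.1.2.2)
    (a : {t : Fin S × Fin A × Fin A // 0 < v.N t.1 t.2.1 t.2.2} → ℝ) (ha : ∀ t, 0 ≤ a t)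
    {lam : ℝ} (hlam : 0 ≤ lam) (Δ : ℝ) :
    (P {ω | Δ ≤ ∑ t : {t : Fin S × Fin A × Fin A // 0 < v.N t.1 t.2.1 t.2.2},
        a t * |(Y t.1.1 t.1.2.1 t.1.2.2 ω : ℝ) / (m t)
          - sigmoid (v.r t.1.1 t.1.2.1 - v.r t.1.1 t.1.2.2)|}).toReal
      ≤ Real.exp (-lam * Δ) *
        ((2:ℝ) ^ (Fintype.card {t : Fin S × Fin A × Fin A // 0 < v.N t.1 t.2.1 t.2.2}) *
          Real.exp (∑ t : {t : Fin S × Fin A × Fin A // 0 < v.N t.1 t.2.1 t.2.2},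
            (lam * a t)^2 / (m t))) := by
  classical
  set p : {t : Fin S × Fin A × Fin A // 0 < v.N t.1 t.2.1 t.2.2} → ℝ := fun t => sigmoid (v.r t.1.1 t.1.2.1 - v.r t.1.1 t.1.2.2) with hp_def
  set X : {t : Fin S × Fin A × Fin A // 0 < v.N t.1 t.2.1 t.2.2} → Ω → ℝ := fun t =>
    (fun x : ℝ => a t * |x / (m t) - p t|) ∘ (fun ω => (Y t.1.1 t.1.2.1 t.1.2.2 ω : ℝ))
    with hX_def
  have hfmeas : ∀ t : {t : Fin S × Fin A × Fin A // 0 < v.N t.1 t.2.1 t.2.2}, Measurable (fun x : ℝ => a t * |x / (m t) - p t|) := by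
    intro t; fun_prop
  have hYmeas : ∀ t : {t : Fin S × Fin A × Fin A // 0 < v.N t.1 t.2.1 t.2.2}, Measurable (fun ω => (Y t.1.1 t.1.2.1 t.1.2.2 ω : ℝ)) := by
    intro t
    exact Measurable.comp (measurable_from_top) (hbtl.1 _ _ _)
  have hmeasX : ∀ t : {t : Fin S × Fin A × Fin A // 0 < v.N t.1 t.2.1 t.2.2}, Measurable (X t) := fun t => (hfmeas t).comp (hYmeas t)
  have hindep : iIndepFun (m := fun _ => (inferInstance : MeasurableSpace ℝ)) X P :=
    iIndepFun.comp hbtl.2.2 _ hfmeas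
  have hlaw : ∀ t : {t : Fin S × Fin A × Fin A // 0 < v.N t.1 t.2.1 t.2.2}, HasBinomialLaw P (Y t.1.1 t.1.2.1 t.1.2.2) (m t) (p t) := by
    intro t
    have h := hbtl.2.1 t.1.1 t.1.2.1 t.1.2.2 t.2
    have hceil : ⌈(n : ℝ) * v.N t.1.1 t.1.2.1 t.1.2.2⌉₊ = m t := by
      rw [← hmr t, Nat.ceil_natCast]
    rwa [hceil] at h
  have hp0 : ∀ t : {t : Fin S × Fin A × Fin A // 0 < v.N t.1 t.2.1 t.2.2}, 0 ≤ p t := fun t => (RLHF.sigmoid_pos _).le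
  have hp1 : ∀ t : {t : Fin S × Fin A × Fin A // 0 < v.N t.1 t.2.1 t.2.2}, p t ≤ 1 := fun t => (RLHF.sigmoid_lt_one _).le
  have hint : ∀ t : {t : Fin S × Fin A × Fin A // 0 < v.N t.1 t.2.1 t.2.2}, Integrable (fun ω => Real.exp (lam * X t ω)) P := by
    intro t
    exact RLHF.integrable_exp_abs (hbtl.1 _ _ _) (hlaw t) (hp0 t) (hp1 t) (hm t) lam (a t)
  have hintsum : Integrable (fun ω => Real.exp (lam * (∑ t : {t : Fin S × Fin A × Fin A // 0 < v.N t.1 t.2.1 t.2.2}, X t) ω)) P :=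
    iIndepFun.integrable_exp_mul_sum hindep hmeasX (fun t _ => hint t)
  have hset : {ω | Δ ≤ ∑ t : {t : Fin S × Fin A × Fin A // 0 < v.N t.1 t.2.1 t.2.2}, a t * |(Y t.1.1 t.1.2.1 t.1.2.2 ω : ℝ) / (m t)
          - sigmoid (v.r t.1.1 t.1.2.1 - v.r t.1.1 t.1.2.2)|}
      = {ω | Δ ≤ (∑ t : {t : Fin S × Fin A × Fin A // 0 < v.N t.1 t.2.1 t.2.2}, X t) ω} := by
    ext ω
    simp only [Set.mem_setOf_eq, Finset.sum_apply]
    rfl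
  rw [hset]
  have h1 := measure_ge_le_exp_mul_mgf (X := ∑ t : {t : Fin S × Fin A × Fin A // 0 < v.N t.1 t.2.1 t.2.2}, X t) (μ := P) Δ hlam hintsum
  refine h1.trans ?_
  apply mul_le_mul_of_nonneg_left ?_ (Real.exp_pos _).le
  rw [iIndepFun.mgf_sum hindep hmeasX Finset.univ]
  calc ∏ t : {t : Fin S × Fin A × Fin A // 0 < v.N t.1 t.2.1 t.2.2}, mgf (X t) P lam
      ≤ ∏ t : {t : Fin S × Fin A × Fin A // 0 < v.N t.1 t.2.1 t.2.2}, (2 * Real.exp ((lam * a t)^2 / (m t))) := by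
        apply Finset.prod_le_prod
        · intro t _; exact mgf_nonneg
        · intro t _
          exact RLHF.mgf_abs_le (hbtl.1 _ _ _) (hlaw t) (hp0 t) (hp1 t) (hm t) hlam (ha t)
    _ = (2:ℝ) ^ (Fintype.card {t : Fin S × Fin A × Fin A // 0 < v.N t.1 t.2.1 t.2.2}) * Real.exp (∑ t : {t : Fin S × Fin A × Fin A // 0 < v.N t.1 t.2.1 t.2.2}, (lam * a t)^2 / (m t)) := by
        rw [Finset.prod_mul_distrib, Finset.prod_const, Real.exp_sum]
        rfl

end Chernoff

/-- **Theorem 1 (Instance-dependent upper bound for RL-LOW).**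
There exists a constant `C_up > 0` depending only on `L` such that for every consistent
instance `v` there is a threshold `n₀` such that for every `n ≥ n₀` with `n·N_{k,i,j} ∈ ℕ`
and every measurable choice of outputs `î_k ∈ Î_k`, the expected simple regret of RL-LOW
satisfies `E[R_n] ≤ exp(−n/(C_up·H(v)))`. -/
theorem rl_low_instance_dependent_upper_bound (L : ℝ) (hL : 0 < L) :
    ∃ Cup : ℝ, 0 < Cup ∧
      ∀ (S A d : ℕ), 2 ≤ A →
      ∀ v : Inst S A d, (∀ k i, |v.r k i| ≤ L) → v.Consistent →
      ∀ istar : Fin S → Fin A, v.BestAction istar →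
      ∀ w : Fin S → Fin A → Fin A → Fin S → Fin A → Fin A → ℝ,
        (∀ k i j, i ≠ j → v.IsLOW k i j (w k i j)) →
      ∃ n₀ : ℕ, ∀ n : ℕ, n₀ ≤ n →
        (∀ k i j, ∃ m : ℕ, (m : ℝ) = n * v.N k i j) →
        ∀ (Ω : Type) [MeasurableSpace Ω] (P : MeasureTheory.Measure Ω),
          MeasureTheory.IsProbabilityMeasure P →
        ∀ Y : Fin S → Fin A → Fin A → Ω → ℕ, IsBTLSample v n P Y →
        ∀ ihat : Ω → Fin S → Fin A,
          (∀ k a, MeasurableSet {ω | ihat ω k = a}) →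
          (∀ ω k j, j ≠ ihat ω k →
            0 ≤ v.rhat L n w (fun k' i' j' => Y k' i' j' ω) k (ihat ω k) j) →
          ∫ ω, v.regret istar (ihat ω) ∂P ≤
            Real.exp (-(n : ℝ) / (Cup * v.H istar w)) := by
  
  classical
  have hMpos : (0:ℝ) < 2 * (1 + Real.exp (2*L)) := by positivity
  refine ⟨8 * (2 * (1 + Real.exp (2*L)))^2, by positivity, ?_⟩
  intro S A d hA v hr hcons istar hbest w hw
  by_cases hS : S = 0
  · refine ⟨1, ?_⟩
    intro n hn hNdat Ω instΩ P hP Y hbtl ihat hihatmeas hopt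
    have hreg : ∀ ω : Ω, v.regret istar (ihat ω) = 0 := by
      intro ω
      rw [Inst.regret]
      subst hS
      simp
    simp only [hreg, MeasureTheory.integral_zero]
    exact (Real.exp_pos _).le
  -- main case
  set M : ℝ := 2 * (1 + Real.exp (2*L)) with hM_def
  have hΔpos : ∀ k i, i ≠ istar k → 0 < v.gap istar k i := by
    intro k i h
    exact sub_pos.2 (hbest k i h)
  have hΔ2L : ∀ k i, v.gap istar k i ≤ 2*L := by
    intro k i
    have h1 := abs_le.1 (hr k (istar k))
    have h2 := abs_le.1 (hr k i)
    rw [Inst.gap]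
    linarith [h1.2, h2.1]
  have hγpos : ∀ k i, i ≠ istar k → 0 < v.cost (w k i (istar k)) := by
    intro k i h
    exact RLHF.cost_pos v h (hw k i (istar k) h).1
  have hHbdd : BddAbove {x | ∃ k i, i ≠ istar k ∧
      x = v.cost (w k i (istar k)) / (v.gap istar k i)^2} := by
    apply Set.Finite.bddAbove
    apply Set.Finite.subset (Set.finite_range
      (fun p : Fin S × Fin A => v.cost (w p.1 p.2 (istar p.1)) / (v.gap istar p.1 p.2)^2))
    rintro x ⟨k, i, _, rfl⟩
    exact ⟨(k, i), rfl⟩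
  have hHub : ∀ k i, i ≠ istar k →
      v.cost (w k i (istar k)) / (v.gap istar k i)^2 ≤ v.H istar w := by
    intro k i h
    exact le_csSup hHbdd ⟨k, i, h, rfl⟩
  have hHpos : 0 < v.H istar w := by
    have hk0 : 0 < S := Nat.pos_of_ne_zero hS
    set k0 : Fin S := ⟨0, hk0⟩
    have hcard : 1 < Fintype.card (Fin A) := by
      rw [Fintype.card_fin]; omega
    obtain ⟨i0, hi0⟩ := Fintype.exists_ne_of_one_lt_card hcard (istar k0)
    calc (0:ℝ) < v.cost (w k0 i0 (istar k0)) / (v.gap istar k0 i0)^2 :=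
          div_pos (hγpos k0 i0 hi0) (pow_pos (hΔpos k0 i0 hi0) 2)
      _ ≤ v.H istar w := hHub k0 i0 hi0
  set cT := Fintype.card {t : Fin S × Fin A × Fin A // 0 < v.N t.1 t.2.1 t.2.2} with hcT_def
  set K : ℝ := 2*L*A*2^cT with hK_def
  have hA0 : (0:ℝ) < A := by
    have : 0 < A := by omega
    exact_mod_cast this
  have hKpos : 0 < K := by
    rw [hK_def]; positivity
  refine ⟨⌈(8 * M^2 * v.H istar w) * (1 + |Real.log K|)⌉₊ + 1, ?_⟩
  intro n hn hNdat Ω instΩ P hP Y hbtl ihat hihatmeas hopt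
  haveI := hP
  have hn1 : 1 ≤ n := le_trans (by omega) hn
  have hnR : (0:ℝ) < n := by exact_mod_cast hn1
  -- the sample sizes
  choose m hmr using
    fun t : {t : Fin S × Fin A × Fin A // 0 < v.N t.1 t.2.1 t.2.2} =>
      hNdat t.1.1 t.1.2.1 t.1.2.2
  have hm : ∀ t : {t : Fin S × Fin A × Fin A // 0 < v.N t.1 t.2.1 t.2.2}, 0 < m t := by
    intro t
    have h1 : (0:ℝ) < (n:ℝ) * v.N t.1.1 t.1.2.1 t.1.2.2 := mul_pos hnR t.2
    rw [← hmr t] at h1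
    exact_mod_cast h1
  -- Step A : integral of the regret
  have hptw : ∀ ω : Ω, v.regret istar (ihat ω) = ∑ k, ∑ i,
      Set.indicator {ω' | ihat ω' k = i} (fun _ => v.ρ k * v.gap istar k i) ω := by
    intro ω
    rw [Inst.regret]
    apply Finset.sum_congr rfl
    intro k _
    have h1 : ∀ i : Fin A, Set.indicator {ω' | ihat ω' k = i}
        (fun _ => v.ρ k * v.gap istar k i) ω
        = if ihat ω k = i then v.ρ k * v.gap istar k i else 0 := by
      intro i
      rw [Set.indicator_apply]
      rfl
    rw [Finset.sum_congr rfl (fun i _ => h1 i),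
        Finset.sum_ite_eq Finset.univ (ihat ω k)
          (fun i => v.ρ k * v.gap istar k i)]
    simp [Inst.gap]
  have hregint : ∫ ω, v.regret istar (ihat ω) ∂P = ∑ k, ∑ i,
      (P {ω | ihat ω k = i}).toReal * (v.ρ k * v.gap istar k i) := by
    rw [MeasureTheory.integral_congr_ae (Filter.EventuallyEq.of_eq (funext hptw))]
    rw [MeasureTheory.integral_finset_sum]
    · apply Finset.sum_congr rfl
      intro k _
      rw [MeasureTheory.integral_finset_sum]
      · apply Finset.sum_congr rfl
        intro i _
        rw [MeasureTheory.integral_indicator_const _ (hihatmeas k i), smul_eq_mul, measureReal_def]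
      · intro i _
        exact (MeasureTheory.integrable_const _).indicator (hihatmeas k i)
    · intro k _
      apply MeasureTheory.integrable_finset_sum
      intro i _
      exact (MeasureTheory.integrable_const _).indicator (hihatmeas k i)
  -- Step B : per-pair probability bound
  have hBnd : ∀ k i, i ≠ istar k → (P {ω | ihat ω k = i}).toReal
      ≤ 2^cT * Real.exp (-(n:ℝ) / (4 * M^2 * v.H istar w)) := by
    intro k i hki
    set γ : ℝ := v.cost (w k i (istar k)) with hγ_def
    set Δ : ℝ := v.gap istar k i with hΔ_def
    have hγp : 0 < γ := hγpos k i hki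
    have hΔp : 0 < Δ := hΔpos k i hki
    set lam : ℝ := n * Δ / (2 * M^2 * γ) with hlam_def
    have hlamp : 0 ≤ lam := by positivity
    set a : {t : Fin S × Fin A × Fin A // 0 < v.N t.1 t.2.1 t.2.2} → ℝ :=
      fun t => M * |w k i (istar k) t.1.1 t.1.2.1 t.1.2.2| with ha_def
    have hanneg : ∀ t, 0 ≤ a t := by
      intro t; rw [ha_def]; positivity
    -- event inclusion
    have hsub : {ω | ihat ω k = i} ⊆ {ω | Δ ≤
        ∑ t : {t : Fin S × Fin A × Fin A // 0 < v.N t.1 t.2.1 t.2.2},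
          a t * |(Y t.1.1 t.1.2.1 t.1.2.2 ω : ℝ) / (m t)
            - RLHF.sigmoid (v.r t.1.1 t.1.2.1 - v.r t.1.1 t.1.2.2)|} := by
      intro ω hω
      simp only [Set.mem_setOf_eq] at hω ⊢
      have h0 := hopt ω k (istar k) (by rw [hω]; exact (Ne.symm hki))
      rw [hω] at h0
      rw [Inst.rhat, if_neg hki] at h0
      have hchain := RLHF.chain_bound v hL hr n (hw k i (istar k) hki).1
        (fun k' i' j' => Y k' i' j' ω) h0
      have hconv : (∑ k', ∑ i', ∑ j',
          (if 0 < v.N k' i' j' then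
            (2 * (1 + Real.exp (2*L))) * |w k i (istar k) k' i' j'| *
              |v.B n (fun k'' i'' j'' => Y k'' i'' j'' ω) k' i' j'
                - RLHF.sigmoid (v.r k' i' - v.r k' j')| else 0))
          = ∑ t : {t : Fin S × Fin A × Fin A // 0 < v.N t.1 t.2.1 t.2.2},
              a t * |(Y t.1.1 t.1.2.1 t.1.2.2 ω : ℝ) / (m t)
                - RLHF.sigmoid (v.r t.1.1 t.1.2.1 - v.r t.1.1 t.1.2.2)| := by
        rw [← RLHF.sum_subtype_triple v.N (fun x =>
          (2 * (1 + Real.exp (2*L))) * |w k i (istar k) x.1 x.2.1 x.2.2| *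
            |v.B n (fun k'' i'' j'' => Y k'' i'' j'' ω) x.1 x.2.1 x.2.2
              - RLHF.sigmoid (v.r x.1 x.2.1 - v.r x.1 x.2.2)|)]
        apply Finset.sum_congr rfl
        intro t _
        have hBt : v.B n (fun k'' i'' j'' => Y k'' i'' j'' ω) t.1.1 t.1.2.1 t.1.2.2
            = (Y t.1.1 t.1.2.1 t.1.2.2 ω : ℝ) / (m t) := by
          rw [Inst.B, if_pos t.2, hmr t]
        rw [hBt]
        try simp only [ha_def, hM_def]
        try ring
      rw [hconv] at hchain
      exact hchain
    -- Chernoff bound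
    have hchern := RLHF.chernoff v n P Y hbtl m hm hmr a hanneg hlamp Δ
    have hmono : (P {ω | ihat ω k = i}).toReal ≤
        (P {ω | Δ ≤ ∑ t : {t : Fin S × Fin A × Fin A // 0 < v.N t.1 t.2.1 t.2.2},
          a t * |(Y t.1.1 t.1.2.1 t.1.2.2 ω : ℝ) / (m t)
            - RLHF.sigmoid (v.r t.1.1 t.1.2.1 - v.r t.1.1 t.1.2.2)|}).toReal := by
      apply ENNReal.toReal_mono (MeasureTheory.measure_ne_top P _)
      exact measure_mono hsub
    -- the exponent sum
    have hγeq : ∑ t : {t : Fin S × Fin A × Fin A // 0 < v.N t.1 t.2.1 t.2.2},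
        (w k i (istar k) t.1.1 t.1.2.1 t.1.2.2)^2 / v.N t.1.1 t.1.2.1 t.1.2.2 = γ := by
      rw [hγ_def, Inst.cost]
      exact RLHF.sum_subtype_triple v.N
        (fun x => (w k i (istar k) x.1 x.2.1 x.2.2)^2 / v.N x.1 x.2.1 x.2.2)
    have hsum : ∑ t : {t : Fin S × Fin A × Fin A // 0 < v.N t.1 t.2.1 t.2.2},
        (lam * a t)^2 / (m t) = lam^2 * M^2 * γ / n := by
      have hterm : ∀ t : {t : Fin S × Fin A × Fin A // 0 < v.N t.1 t.2.1 t.2.2},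
          (lam * a t)^2 / ((m t : ℝ))
          = lam^2 * M^2 * ((w k i (istar k) t.1.1 t.1.2.1 t.1.2.2)^2
              / v.N t.1.1 t.1.2.1 t.1.2.2) / n := by
        intro t
        have hNt : v.N t.1.1 t.1.2.1 t.1.2.2 ≠ 0 := t.2.ne'
        have hnne : (n:ℝ) ≠ 0 := hnR.ne'
        rw [hmr t]
        simp only [ha_def]
        rw [mul_pow, mul_pow, sq_abs]
        field_simp
      rw [Finset.sum_congr rfl (fun t _ => hterm t), ← Finset.sum_div, ← Finset.mul_sum, hγeq]
    have hfinal : Real.exp (-lam * Δ) * ((2:ℝ)^cT * Real.exp (lam^2 * M^2 * γ / n))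
        = 2^cT * Real.exp (-(n:ℝ) * Δ^2 / (4 * M^2 * γ)) := by
      have hMne : M ≠ 0 := hMpos.ne'
      have hγne : γ ≠ 0 := hγp.ne'
      have hnne : (n:ℝ) ≠ 0 := hnR.ne'
      have he : -lam * Δ + lam^2 * M^2 * γ / n = -(n:ℝ) * Δ^2 / (4 * M^2 * γ) := by
        rw [hlam_def]
        field_simp
        ring
      calc Real.exp (-lam * Δ) * ((2:ℝ)^cT * Real.exp (lam^2 * M^2 * γ / n))
          = (2:ℝ)^cT * (Real.exp (-lam * Δ) * Real.exp (lam^2 * M^2 * γ / n)) := by ring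
        _ = 2^cT * Real.exp (-(n:ℝ) * Δ^2 / (4 * M^2 * γ)) := by
            rw [← Real.exp_add, he]
    have hexp_mono : Real.exp (-(n:ℝ) * Δ^2 / (4 * M^2 * γ))
        ≤ Real.exp (-(n:ℝ) / (4 * M^2 * v.H istar w)) := by
      apply Real.exp_le_exp.2
      have h1 : 1 / v.H istar w ≤ Δ^2 / γ := by
        have h2 : γ / Δ^2 ≤ v.H istar w := hHub k i hki
        have h3 : 0 < γ / Δ^2 := div_pos hγp (pow_pos hΔp 2)
        have h4 := one_div_le_one_div_of_le h3 h2
        rwa [one_div_div] at h4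
      have h5 : (n:ℝ) / (4 * M^2 * v.H istar w) ≤ (n:ℝ) * Δ^2 / (4 * M^2 * γ) := by
        have h6 : (n:ℝ) / (4 * M^2 * v.H istar w)
            = ((n:ℝ) / (4 * M^2)) * (1 / v.H istar w) := by
          field_simp
        have h7 : (n:ℝ) * Δ^2 / (4 * M^2 * γ) = ((n:ℝ) / (4 * M^2)) * (Δ^2 / γ) := by
          field_simp
          try ring
        rw [h6, h7]
        apply mul_le_mul_of_nonneg_left h1
        positivity
      have h8 : -(n:ℝ) * Δ^2 / (4 * M^2 * γ) = -((n:ℝ) * Δ^2 / (4 * M^2 * γ)) := by ring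
      have h9 : -(n:ℝ) / (4 * M^2 * v.H istar w)
          = -((n:ℝ) / (4 * M^2 * v.H istar w)) := by ring
      rw [h8, h9]
      exact neg_le_neg h5
    calc (P {ω | ihat ω k = i}).toReal
        ≤ (P {ω | Δ ≤ ∑ t : {t : Fin S × Fin A × Fin A // 0 < v.N t.1 t.2.1 t.2.2},
            a t * |(Y t.1.1 t.1.2.1 t.1.2.2 ω : ℝ) / (m t)
              - RLHF.sigmoid (v.r t.1.1 t.1.2.1 - v.r t.1.1 t.1.2.2)|}).toReal := hmono
      _ ≤ Real.exp (-lam * Δ) * ((2:ℝ)^cT * Real.exp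
            (∑ t : {t : Fin S × Fin A × Fin A // 0 < v.N t.1 t.2.1 t.2.2},
              (lam * a t)^2 / (m t))) := hchern
      _ = 2^cT * Real.exp (-(n:ℝ) * Δ^2 / (4 * M^2 * γ)) := by rw [hsum]; exact hfinal
      _ ≤ 2^cT * Real.exp (-(n:ℝ) / (4 * M^2 * v.H istar w)) := by
          apply mul_le_mul_of_nonneg_left hexp_mono
          positivity
  -- Step C : total bound
  have hC : ∫ ω, v.regret istar (ihat ω) ∂P
      ≤ K * Real.exp (-(n:ℝ) / (4 * M^2 * v.H istar w)) := by
    rw [hregint]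
    have hterm : ∀ k i, (P {ω | ihat ω k = i}).toReal * (v.ρ k * v.gap istar k i)
        ≤ v.ρ k * (2*L * (2^cT * Real.exp (-(n:ℝ) / (4 * M^2 * v.H istar w)))) := by
      intro k i
      by_cases hki : i = istar k
      · subst hki
        have : v.gap istar k (istar k) = 0 := sub_self _
        rw [this, mul_zero, mul_zero]
        have := (v.ρ_pos k).le
        positivity
      · have h1 := hBnd k i hki
        have h2 := hΔ2L k i
        have h3 : 0 ≤ (P {ω | ihat ω k = i}).toReal := ENNReal.toReal_nonneg
        have h4 : 0 ≤ v.gap istar k i := (hΔpos k i hki).le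
        have h5 := (v.ρ_pos k).le
        calc (P {ω | ihat ω k = i}).toReal * (v.ρ k * v.gap istar k i)
            ≤ (2^cT * Real.exp (-(n:ℝ) / (4 * M^2 * v.H istar w))) * (v.ρ k * (2*L)) := by
              apply mul_le_mul h1 (by
                apply mul_le_mul_of_nonneg_left h2 h5) (by positivity) (by positivity)
          _ = v.ρ k * (2*L * (2^cT * Real.exp (-(n:ℝ) / (4 * M^2 * v.H istar w)))) := by
              ring
    calc ∑ k, ∑ i, (P {ω | ihat ω k = i}).toReal * (v.ρ k * v.gap istar k i)
        ≤ ∑ k, ∑ i : Fin A, v.ρ k *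
            (2*L * (2^cT * Real.exp (-(n:ℝ) / (4 * M^2 * v.H istar w)))) :=
          Finset.sum_le_sum (fun k _ => Finset.sum_le_sum (fun i _ => hterm k i))
      _ = K * Real.exp (-(n:ℝ) / (4 * M^2 * v.H istar w)) := by
          have hconst : ∀ x : Fin S, (∑ _i : Fin A, v.ρ x *
              (2*L * (2^cT * Real.exp (-(n:ℝ) / (4 * M^2 * v.H istar w)))))
              = v.ρ x * ((A:ℝ) * (2*L * (2^cT * Real.exp (-(n:ℝ) / (4 * M^2 * v.H istar w))))) := by
            intro x
            rw [Finset.sum_const, Finset.card_univ, Fintype.card_fin, nsmul_eq_mul]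
            ring
          rw [Finset.sum_congr rfl (fun x _ => hconst x), ← Finset.sum_mul, v.ρ_sum, one_mul,
            hK_def]
          ring
  -- Step D : absorb the constant
  refine hC.trans ?_
  have hc : (0:ℝ) < 8 * M^2 * v.H istar w := by positivity
  have hn0 : (8 * M^2 * v.H istar w) * (1 + |Real.log K|) ≤ (n:ℝ) := by
    have h1 := Nat.le_ceil ((8 * M^2 * v.H istar w) * (1 + |Real.log K|))
    have h2 : (⌈(8 * M^2 * v.H istar w) * (1 + |Real.log K|)⌉₊ : ℝ) ≤ n := by
      exact_mod_cast le_trans (by omega) hn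
    linarith
  have hlogK : Real.log K ≤ (n:ℝ) / (8 * M^2 * v.H istar w) := by
    rw [le_div_iff₀ hc]
    calc Real.log K * (8 * M^2 * v.H istar w)
        ≤ (1 + |Real.log K|) * (8 * M^2 * v.H istar w) := by
          apply mul_le_mul_of_nonneg_right ?_ hc.le
          linarith [le_abs_self (Real.log K), abs_nonneg (Real.log K)]
      _ = (8 * M^2 * v.H istar w) * (1 + |Real.log K|) := mul_comm _ _
      _ ≤ (n:ℝ) := hn0
  have hhalf : (n:ℝ) / (4 * M^2 * v.H istar w)
      = 2 * ((n:ℝ) / (8 * M^2 * v.H istar w)) := by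
    field_simp
    ring
  calc K * Real.exp (-(n:ℝ) / (4 * M^2 * v.H istar w))
      = Real.exp (Real.log K + (-(n:ℝ) / (4 * M^2 * v.H istar w))) := by
        rw [Real.exp_add, Real.exp_log hKpos]
    _ ≤ Real.exp (-(n:ℝ) / (8 * M^2 * v.H istar w)) := by
        apply Real.exp_le_exp.2
        have h8 : -(n:ℝ) / (4 * M^2 * v.H istar w)
            = -((n:ℝ) / (4 * M^2 * v.H istar w)) := by ring
        have h9 : -(n:ℝ) / (8 * M^2 * v.H istar w)
            = -((n:ℝ) / (8 * M^2 * v.H istar w)) := by ring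
        rw [h8, h9]
        linarith [hlogK, hhalf]
end

section
/- Bias of the clipped logit of a binomial proportion (Lemma F.1): Fix β ∈ (1/2, 1), n ∈ ℕ with n ≥ 1, and p ∈ [1−β, β]. Let Y_n ~ Binomial(n, p) and X_n = Y_n/n. Then |E[f(X_n)] − f(E[X_n])| ≤ 3/((1−β)^4·√n). -/
open MeasureTheory ProbabilityTheory

/-- The clipped logit function `f` of Lemma F.1: `f(x) = log(x/(1−x))` on `(1−β, β)`,
clamped to its boundary values outside. -/
noncomputable def flog (β x : ℝ) : ℝ :=
  if x ≤ 1 - β then Real.log ((1 - β) / β)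
  else if β ≤ x then Real.log (β / (1 - β))
  else Real.log (x / (1 - x))

/-- `Y` has the binomial law with `m` trials and success probability `p` under `P`. -/
def HasBinomialLaw {Ω : Type*} [MeasurableSpace Ω] (P : Measure Ω)
    (Y : Ω → ℕ) (m : ℕ) (p : ℝ) : Prop :=
  ∀ t : ℕ, P {ω | Y ω = t} =
    ENNReal.ofReal ((m.choose t : ℝ) * p ^ t * (1 - p) ^ (m - t))

open Finset

/-! ### Auxiliary combinatorial identities -/

lemma sum_choose_mul (n : ℕ) (x y : ℝ) :
    ∑ k ∈ range (n+1), (n.choose k : ℝ) * x ^ k * y ^ (n - k) = (x + y) ^ n := by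
  rw [add_pow]; exact Finset.sum_congr rfl fun k _ => by ring

lemma succ_choose_cast (m i : ℕ) :
    (((m+1).choose (i+1) : ℝ)) * ((i:ℝ)+1) = ((m:ℝ)+1) * (m.choose i : ℝ) := by
  have h : ((m+1) * m.choose i : ℕ) = ((m+1).choose (i+1)) * (i+1) := Nat.add_one_mul_choose_eq m i
  have h' : ((m:ℝ)+1) * ((m.choose i : ℕ):ℝ) = (((m+1).choose (i+1) : ℕ):ℝ) * ((i:ℝ)+1) := by
    exact_mod_cast h
  linarith

lemma sum_mul_choose_mul (n : ℕ) (x y : ℝ) :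
    ∑ k ∈ range (n+1), (k : ℝ) * ((n.choose k : ℝ) * x ^ k * y ^ (n - k))
      = n * x * (x + y) ^ (n - 1) := by
  cases n with
  | zero => simp
  | succ m =>
    rw [Finset.sum_range_succ']
    have hcongr : ∀ i ∈ range (m+1),
        ((i+1 : ℕ) : ℝ) * (((m+1).choose (i+1) : ℝ) * x ^ (i+1) * y ^ (m+1 - (i+1)))
        = ((m:ℝ)+1) * x * ((m.choose i : ℝ) * x ^ i * y ^ (m - i)) := by
      intro i _
      rw [Nat.succ_sub_succ]
      have h := succ_choose_cast m i
      push_cast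
      linear_combination (x ^ (i+1) * y ^ (m - i)) * h
    rw [Finset.sum_congr rfl hcongr, ← Finset.mul_sum, sum_choose_mul]
    push_cast
    simp

lemma sum_mul_mul_choose_mul (n : ℕ) (x y : ℝ) :
    ∑ k ∈ range (n+1), (k : ℝ) * ((k:ℝ) - 1) * ((n.choose k : ℝ) * x ^ k * y ^ (n - k))
      = n * ((n:ℝ) - 1) * x ^ 2 * (x + y) ^ (n - 2) := by
  cases n with
  | zero => simp
  | succ m =>
    rw [Finset.sum_range_succ']
    have hcongr : ∀ i ∈ range (m+1),
        ((i+1 : ℕ) : ℝ) * (((i+1 : ℕ) : ℝ) - 1) *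
          (((m+1).choose (i+1) : ℝ) * x ^ (i+1) * y ^ (m+1 - (i+1)))
        = ((m:ℝ)+1) * x * ((i:ℝ) * ((m.choose i : ℝ) * x ^ i * y ^ (m - i))) := by
      intro i _
      rw [Nat.succ_sub_succ]
      have h := succ_choose_cast m i
      push_cast
      linear_combination ((i:ℝ) * x ^ (i+1) * y ^ (m - i)) * h
    rw [Finset.sum_congr rfl hcongr, ← Finset.mul_sum, sum_mul_choose_mul]
    have h2 : m + 1 - 2 = m - 1 := rfl
    rw [h2]
    push_cast
    ring

/-! ### The master integral formula for the binomial law -/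

lemma binom_integral {Ω : Type} [MeasurableSpace Ω] (P : Measure Ω) [IsProbabilityMeasure P]
    (Y : Ω → ℕ) (hY : Measurable Y) (n : ℕ) (p : ℝ) (hp0 : 0 ≤ p) (hp1 : p ≤ 1)
    (hlaw : HasBinomialLaw P Y n p) (g : ℕ → ℝ) :
    ∫ ω, g (Y ω) ∂P
      = ∑ k ∈ range (n+1), ((n.choose k : ℝ) * p ^ k * (1-p) ^ (n - k)) * g k := by
  set w : ℕ → ℝ := fun k => (n.choose k : ℝ) * p ^ k * (1-p) ^ (n - k) with hw
  have hq0 : (0:ℝ) ≤ 1 - p := by linarith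
  have hwnn : ∀ k, 0 ≤ w k := fun k =>
    mul_nonneg (mul_nonneg (Nat.cast_nonneg _) (pow_nonneg hp0 _)) (pow_nonneg hq0 _)
  have hwzero : ∀ k, n < k → w k = 0 := by
    intro k hk
    simp [hw, Nat.choose_eq_zero_of_lt hk]
  have hnull : P {ω | n < Y ω} = 0 := by
    have hset : {ω | n < Y ω} = ⋃ t : ℕ, {ω | Y ω = n + 1 + t} := by
      ext ω
      simp only [Set.mem_setOf_eq, Set.mem_iUnion]
      constructor
      · intro h
        exact ⟨Y ω - (n+1), by omega⟩
      · rintro ⟨t, ht⟩; omega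
    rw [hset]
    refine measure_iUnion_null fun t => ?_
    rw [hlaw (n+1+t)]
    have : n.choose (n+1+t) = 0 := Nat.choose_eq_zero_of_lt (by omega)
    simp [this]
  have hae : ∀ᵐ ω ∂P, Y ω ≤ n := by
    rw [ae_iff]
    convert hnull using 2
    ext ω; simp
  have hmeas : Measurable fun ω => g (min (Y ω) n) :=
    (measurable_from_nat (f := fun t => g (min t n))).comp hY
  have hcongr : (fun ω => g (min (Y ω) n)) =ᵐ[P] fun ω => g (Y ω) := by
    filter_upwards [hae] with ω h
    rw [min_eq_left h]
  have hbd : ∀ ω, ‖g (min (Y ω) n)‖ ≤ ∑ t ∈ range (n+1), |g t| := by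
    intro ω
    rw [Real.norm_eq_abs]
    exact Finset.single_le_sum (f := fun t => |g t|) (fun t _ => abs_nonneg _)
      (Finset.mem_range.2 (Nat.lt_succ_of_le (min_le_right _ _)))
  have hint' : Integrable (fun ω => g (min (Y ω) n)) P := by
    refine Integrable.mono' (integrable_const (∑ t ∈ range (n+1), |g t|))
      hmeas.aestronglyMeasurable ?_
    filter_upwards with ω using hbd ω
  have hint : Integrable (fun ω => g (Y ω)) P := hint'.congr hcongr
  have hμs : ∀ t : ℕ, (P.map Y) {t} = ENNReal.ofReal (w t) := by
    intro t
    rw [Measure.map_apply hY (measurableSet_singleton t)]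
    exact hlaw t
  have hgm : Integrable g (P.map Y) := by
    rw [integrable_map_measure (measurable_from_nat (f := g)).aestronglyMeasurable
      hY.aemeasurable]
    exact hint
  have h1 : ∫ ω, g (Y ω) ∂P = ∫ t, g t ∂(P.map Y) :=
    (integral_map hY.aemeasurable (measurable_from_nat (f := g)).aestronglyMeasurable).symm
  rw [h1, integral_countable' hgm]
  have hterm : ∀ t : ℕ, ((P.map Y) {t}).toReal • g t = w t * g t := by
    intro t
    rw [hμs t, ENNReal.toReal_ofReal (hwnn t), smul_eq_mul]
  simp only [measureReal_def]
  rw [tsum_congr hterm]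
  refine tsum_eq_sum fun t ht => ?_
  rw [hwzero t (by simpa using Finset.mem_range.not.1 ht), zero_mul]

/-! ### Lipschitz estimate for `flog` -/

lemma log_lip {m u v : ℝ} (hm : 0 < m) (hu : m ≤ u) (hv : m ≤ v) :
    |Real.log u - Real.log v| ≤ |u - v| / m := by
  wlog h : v ≤ u generalizing u v
  · rw [abs_sub_comm, abs_sub_comm u v]
    exact this hv hu (le_of_not_ge h)
  have hv0 : 0 < v := lt_of_lt_of_le hm hv
  have hu0 : 0 < u := lt_of_lt_of_le hm hu
  rw [abs_of_nonneg (sub_nonneg.2 (Real.log_le_log hv0 h)),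
    abs_of_nonneg (sub_nonneg.2 h), ← Real.log_div (ne_of_gt hu0) (ne_of_gt hv0)]
  have h1 : Real.log (u / v) ≤ u / v - 1 := Real.log_le_sub_one_of_pos (div_pos hu0 hv0)
  have h2 : u / v - 1 = (u - v) / v := by field_simp
  have h3 : (u - v) / v ≤ (u - v) / m :=
    div_le_div_of_nonneg_left (sub_nonneg.2 h) hm hv
  linarith

lemma flog_eq_clamp (β : ℝ) (hβ : β ∈ Set.Ioo (1/2 : ℝ) 1) (x : ℝ) :
    flog β x = Real.log (max (1-β) (min β x) / (1 - max (1-β) (min β x))) := by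
  have hb : 1 - β < β := by have := hβ.1; linarith
  unfold flog
  rcases le_or_gt x (1-β) with h1 | h1
  · rw [if_pos h1, min_eq_right (h1.trans hb.le), max_eq_left h1,
      show (1:ℝ) - (1-β) = β by ring]
  · rw [if_neg (not_le.2 h1)]
    rcases le_or_gt β x with h2 | h2
    · rw [if_pos h2, min_eq_left h2, max_eq_right hb.le]
    · rw [if_neg (not_le.2 h2), min_eq_right h2.le, max_eq_right h1.le]

lemma flog_lipschitz (β : ℝ) (hβ : β ∈ Set.Ioo (1/2 : ℝ) 1) (a b : ℝ) :
    |flog β a - flog β b| ≤ (2 / (1 - β)) * |a - b| := by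
  have hb0 : 0 < 1 - β := by linarith [hβ.2]
  have hb : 1 - β < β := by have := hβ.1; linarith
  set u := max (1-β) (min β a) with hu
  set v := max (1-β) (min β b) with hv
  have hul : 1 - β ≤ u := le_max_left _ _
  have hvl : 1 - β ≤ v := le_max_left _ _
  have huu : u ≤ β := max_le hb.le (min_le_left _ _)
  have hvu : v ≤ β := max_le hb.le (min_le_left _ _)
  have hclamp : |u - v| ≤ |a - b| := by
    calc |u - v| ≤ |min β a - min β b| := by
          rw [hu, hv, max_comm (1-β) (min β a), max_comm (1-β) (min β b)]
          exact abs_max_sub_max_le_abs _ _ _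
      _ ≤ |a - b| := by
          have := abs_min_sub_min_le_max β a β b
          simpa using this
  rw [flog_eq_clamp β hβ a, flog_eq_clamp β hβ b, ← hu, ← hv]
  have hu0 : (0:ℝ) < u := lt_of_lt_of_le hb0 hul
  have hv0 : (0:ℝ) < v := lt_of_lt_of_le hb0 hvl
  have hu1 : 1 - β ≤ 1 - u := by linarith [huu]
  have hv1 : 1 - β ≤ 1 - v := by linarith [hvu]
  rw [Real.log_div (ne_of_gt hu0) (by linarith : (1:ℝ) - u ≠ 0),
    Real.log_div (ne_of_gt hv0) (by linarith : (1:ℝ) - v ≠ 0)]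
  have l1 : |Real.log u - Real.log v| ≤ |u - v| / (1 - β) := log_lip hb0 hul hvl
  have l2 : |Real.log (1-u) - Real.log (1-v)| ≤ |(1-u) - (1-v)| / (1 - β) :=
    log_lip hb0 hu1 hv1
  have h12 : |(1-u) - (1-v)| = |u - v| := by rw [show (1-u) - (1-v) = -(u-v) by ring, abs_neg]
  calc |Real.log u - Real.log (1-u) - (Real.log v - Real.log (1-v))|
      ≤ |Real.log u - Real.log v| + |Real.log (1-u) - Real.log (1-v)| := by
        rw [show Real.log u - Real.log (1-u) - (Real.log v - Real.log (1-v))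
          = (Real.log u - Real.log v) - (Real.log (1-u) - Real.log (1-v)) by ring]
        exact abs_sub _ _
    _ ≤ |u - v| / (1 - β) + |u - v| / (1 - β) := by rw [h12] at l2; linarith
    _ = (2 / (1 - β)) * |u - v| := by ring
    _ ≤ (2 / (1 - β)) * |a - b| := by
        apply mul_le_mul_of_nonneg_left hclamp
        positivity

/-- **Lemma F.1 (Bias of the clipped logit of a binomial proportion).**
Fix `β ∈ (1/2, 1)`, `n ≥ 1` and `p ∈ [1−β, β]`. If `Y_n ~ Binomial(n, p)` and
`X_n = Y_n/n`, then `|E[f(X_n)] − f(E[X_n])| ≤ 3/((1−β)⁴·√n)`. -/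
theorem binomial_clipped_logit_bias (β : ℝ) (hβ : β ∈ Set.Ioo (1 / 2 : ℝ) 1)
    (n : ℕ) (hn : 1 ≤ n) (p : ℝ) (hp : p ∈ Set.Icc (1 - β) β)
    (Ω : Type) [MeasurableSpace Ω] (P : Measure Ω) [IsProbabilityMeasure P]
    (Y : Ω → ℕ) (hY : Measurable Y) (hlaw : HasBinomialLaw P Y n p) :
    |(∫ ω, flog β ((Y ω : ℝ) / n) ∂P) - flog β (∫ ω, (Y ω : ℝ) / n ∂P)| ≤
      3 / ((1 - β) ^ 4 * Real.sqrt n) := by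
  have hb0 : (0:ℝ) < 1 - β := by linarith [hβ.2]
  have hb1 : (1:ℝ) - β < 1 := by linarith [hβ.1]
  have hp0 : (0:ℝ) ≤ p := le_trans hb0.le hp.1
  have hp1 : p ≤ 1 := le_trans hp.2 hβ.2.le
  have hn0 : (0:ℝ) < n := by exact_mod_cast hn
  have hsn : (0:ℝ) < Real.sqrt n := Real.sqrt_pos.2 hn0
  set w : ℕ → ℝ := fun k => (n.choose k : ℝ) * p ^ k * (1-p) ^ (n - k) with hw
  have hwnn : ∀ k, 0 ≤ w k := fun k =>
    mul_nonneg (mul_nonneg (Nat.cast_nonneg _) (pow_nonneg hp0 _))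
      (pow_nonneg (by linarith) _)
  have hpq : p + (1 - p) = 1 := by ring
  have S0 : ∑ k ∈ range (n+1), w k = 1 := by
    have := sum_choose_mul n p (1-p); rw [hpq, one_pow] at this; exact this
  have S1 : ∑ k ∈ range (n+1), (k:ℝ) * w k = n * p := by
    have := sum_mul_choose_mul n p (1-p); rw [hpq, one_pow, mul_one] at this; exact this
  have S2 : ∑ k ∈ range (n+1), (k:ℝ) * ((k:ℝ) - 1) * w k = n * ((n:ℝ) - 1) * p ^ 2 := by
    have := sum_mul_mul_choose_mul n p (1-p); rw [hpq, one_pow, mul_one] at this; exact this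
  -- the mean of X_n is p
  have hmean : ∫ ω, (Y ω : ℝ) / n ∂P = p := by
    rw [binom_integral P Y hY n p hp0 hp1 hlaw (fun t => (t:ℝ)/n)]
    have : ∀ k ∈ range (n+1), w k * ((k:ℝ)/n) = (1/(n:ℝ)) * ((k:ℝ) * w k) := by
      intro k _; field_simp
    rw [Finset.sum_congr rfl this, ← Finset.mul_sum, S1]
    field_simp
  -- the expectation of flog as a finite sum
  have hSf : ∫ ω, flog β ((Y ω : ℝ) / n) ∂P
      = ∑ k ∈ range (n+1), w k * flog β ((k:ℝ)/n) :=
    binom_integral P Y hY n p hp0 hp1 hlaw (fun t => flog β ((t:ℝ)/n))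
  rw [hmean, hSf]
  set D := flog β p with hD
  -- variance computation
  set V : ℝ := ∑ k ∈ range (n+1), w k * ((k:ℝ)/n - p)^2 with hV
  have hVval : V = p * (1 - p) / n := by
    have hterm : ∀ k ∈ range (n+1), w k * ((k:ℝ)/n - p)^2
        = (1/(n:ℝ)^2) * ((k:ℝ)*((k:ℝ)-1)*w k)
          + (1/(n:ℝ)^2 - 2*p/(n:ℝ)) * ((k:ℝ)*w k) + p^2 * w k := by
      intro k _; field_simp; ring
    rw [hV, Finset.sum_congr rfl hterm]
    rw [Finset.sum_add_distrib, Finset.sum_add_distrib, ← Finset.mul_sum, ← Finset.mul_sum,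
      ← Finset.mul_sum, S0, S1, S2]
    field_simp
    ring
  -- Cauchy-Schwarz: E|X - p| ≤ sqrt V
  set A : ℝ := ∑ k ∈ range (n+1), w k * |(k:ℝ)/n - p| with hA
  have hAnn : 0 ≤ A := Finset.sum_nonneg fun k _ => mul_nonneg (hwnn k) (abs_nonneg _)
  have hCS : A ^ 2 ≤ V := by
    have := Finset.sum_sq_le_sum_mul_sum_of_sq_eq_mul (range (n+1))
      (r := fun k => w k * |(k:ℝ)/n - p|) (f := w)
      (g := fun k => w k * ((k:ℝ)/n - p)^2)
      (fun k _ => hwnn k)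
      (fun k _ => mul_nonneg (hwnn k) (sq_nonneg _))
      (fun k _ => by rw [mul_pow, sq_abs]; ring)
    rw [S0, one_mul] at this
    exact this
  have hAle : A ≤ Real.sqrt V := by
    rw [← Real.sqrt_sq hAnn]
    exact Real.sqrt_le_sqrt hCS
  have hsqrtV : Real.sqrt V ≤ 1 / (2 * Real.sqrt n) := by
    have hpq4 : p * (1 - p) ≤ 1/4 := by nlinarith [sq_nonneg (p - 1/2)]
    have hVle : V ≤ 1/(4*(n:ℝ)) := by
      rw [hVval]
      rw [div_le_div_iff₀ hn0 (by positivity)]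
      nlinarith
    calc Real.sqrt V ≤ Real.sqrt (1/(4*(n:ℝ))) := Real.sqrt_le_sqrt hVle
      _ = 1 / (2 * Real.sqrt n) := by
          rw [show (1:ℝ)/(4*(n:ℝ)) = (1/(2*Real.sqrt n))^2 by
            rw [div_pow, one_pow, mul_pow, Real.sq_sqrt hn0.le]; norm_num]
          exact Real.sqrt_sq (by positivity)
  -- main estimate
  have hkey : (∑ k ∈ range (n+1), w k * flog β ((k:ℝ)/n)) - D
      = ∑ k ∈ range (n+1), w k * (flog β ((k:ℝ)/n) - D) := by
    rw [Finset.sum_congr rfl (fun k _ => mul_sub (w k) (flog β ((k:ℝ)/n)) D),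
      Finset.sum_sub_distrib, ← Finset.sum_mul, S0, one_mul]
  rw [hkey]
  calc |∑ k ∈ range (n+1), w k * (flog β ((k:ℝ)/n) - D)|
      ≤ ∑ k ∈ range (n+1), |w k * (flog β ((k:ℝ)/n) - D)| :=
        Finset.abs_sum_le_sum_abs _ _
    _ ≤ ∑ k ∈ range (n+1), w k * ((2/(1-β)) * |(k:ℝ)/n - p|) := by
        refine Finset.sum_le_sum fun k _ => ?_
        rw [abs_mul, abs_of_nonneg (hwnn k)]
        exact mul_le_mul_of_nonneg_left (flog_lipschitz β hβ ((k:ℝ)/n) p) (hwnn k)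
    _ = (2/(1-β)) * A := by
        rw [hA, Finset.mul_sum]
        exact Finset.sum_congr rfl fun k _ => by ring
    _ ≤ (2/(1-β)) * (1 / (2 * Real.sqrt n)) := by
        apply mul_le_mul_of_nonneg_left (hAle.trans hsqrtV)
        positivity
    _ = 1 / ((1-β) * Real.sqrt n) := by
        field_simp
    _ ≤ 3 / ((1 - β) ^ 4 * Real.sqrt n) := by
        rw [div_le_div_iff₀ (by positivity) (by positivity)]
        have hcube : (1-β)^3 ≤ 1 := pow_le_one₀ hb0.le hb1.le
        have h3 : (1-β)^4 ≤ 3*(1-β) := by nlinarith [hb0]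
        nlinarith [mul_le_mul_of_nonneg_right h3 hsn.le, hsn]
end

section
/- SubGaussianity of the clipped logit of a Gaussian-perturbed binomial proportion (Lemma H.2): Fix β ∈ (1/2, 1). There exists a constant C > 0 depending only on β (the paper gives C = (6√(2e)·(3√(log 2)+1))²·3/(2(1−β)^4)) such that for every ε, δ ∈ (0,1), every n ∈ ℕ with n ≥ 1 and p ∈ [1−β, β], with Y_n ~ Binomial(n, p) and X̃_n = Y_n/n + ξ_n where ξ_n is an independent Gaussian with mean 0 and variance 2·log(1.25/δ)/(εn)², the random variable f(X̃_n) is subGaussian with variance proxy at most C·(1/n + 8·log(1.25/δ)/(εn)²); that is, E[exp(t·(f(X̃_n) − E[f(X̃_n)]))] ≤ exp(C·(1/n + 8·log(1.25/δ)/(εn)²)·t²/2) for all t ∈ ℝ. -/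
open MeasureTheory ProbabilityTheory Real Finset
open scoped NNReal ENNReal

set_option linter.unusedSectionVars false
set_option maxHeartbeats 1000000


section flog
variable {β : ℝ} (hβ : β ∈ Set.Ioo (1 / 2 : ℝ) 1)
include hβ

lemma hb1 : 0 < 1 - β := by simp [hβ.2]
lemma hb2 : 1 - β < β := by linarith [hβ.1]
lemma hb3 : (0:ℝ) < β := by linarith [hβ.1]

lemma flog_eq (x : ℝ) :
    flog β x = Real.log ((max (1-β) (min β x)) / (1 - max (1-β) (min β x))) := by
  have h1 := hb1 hβ; have h2 := hb2 hβ
  unfold flog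
  rcases le_or_gt x (1-β) with h | h
  · rw [if_pos h, min_eq_right (by linarith), max_eq_left h]
    norm_num
  · rw [if_neg (not_le.mpr h)]
    rcases le_or_gt β x with h' | h'
    · rw [if_pos h', min_eq_left h', max_eq_right (le_of_lt h2)]
    · rw [if_neg (not_le.mpr h'), min_eq_right (le_of_lt h'), max_eq_right (le_of_lt h)]

lemma flog_measurable : Measurable (flog β) := by
  unfold flog
  refine Measurable.ite (measurableSet_Iic (a := 1 - β)) measurable_const ?_
  refine Measurable.ite (measurableSet_Ici (a := β)) measurable_const ?_
  exact Real.measurable_log.comp (measurable_id.div (measurable_const.sub measurable_id))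

lemma flog_bounded (x : ℝ) : |flog β x| ≤ Real.log (β / (1 - β)) := by
  have h1 := hb1 hβ; have h2 := hb2 hβ; have h3 := hb3 hβ
  rw [flog_eq hβ]
  set u := max (1-β) (min β x) with hu
  have hul : 1 - β ≤ u := le_max_left _ _
  have huu : u ≤ β := max_le (le_of_lt h2) (min_le_left _ _)
  have h1u : 0 < 1 - u := by linarith [hβ.2]
  have hupos : 0 < u := lt_of_lt_of_le h1 hul
  rw [abs_le]
  constructor
  · rw [← Real.log_inv, ← one_div, div_div_eq_mul_div, one_mul]
    apply Real.log_le_log (by positivity)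
    rw [div_le_div_iff₀ h3 h1u]; nlinarith
  · apply Real.log_le_log (by positivity)
    rw [div_le_div_iff₀ h1u h1]; nlinarith

lemma flog_lip (x y : ℝ) : |flog β x - flog β y| ≤ (2 / (1-β)) * |x - y| := by
  have h1 := hb1 hβ; have h2 := hb2 hβ; have h3 := hb3 hβ
  rw [flog_eq hβ x, flog_eq hβ y]
  set u := max (1-β) (min β x) with hu
  set w := max (1-β) (min β y) with hw
  have memIcc : ∀ z : ℝ, max (1-β) (min β z) ∈ Set.Icc (1-β) β := fun z =>
    ⟨le_max_left _ _, max_le (le_of_lt h2) (min_le_left _ _)⟩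
  have hlog : ∀ z ∈ Set.Icc (1-β) β,
      Real.log (z / (1 - z)) = Real.log z - Real.log (1 - z) := by
    intro z hz
    exact Real.log_div (by linarith [hz.1]) (by intro h; have := hz.2; linarith [hβ.2, sub_eq_zero.mp h])
  rw [hlog u (memIcc x), hlog w (memIcc y)]
  have key : ∀ a ∈ Set.Icc (1-β) β, ∀ b ∈ Set.Icc (1-β) β,
      |(Real.log a - Real.log (1-a)) - (Real.log b - Real.log (1-b))| ≤ (2/(1-β)) * |a - b| := by
    intro a ha b hb
    have := Convex.norm_image_sub_le_of_norm_hasDerivWithin_le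
      (f := fun z : ℝ => Real.log z - Real.log (1 - z))
      (f' := fun z : ℝ => z⁻¹ + (1-z)⁻¹) (s := Set.Icc (1-β) β) (C := 2/(1-β))
      (fun z hz => ?_) (fun z hz => ?_) (convex_Icc _ _) hb ha
    · simpa [Real.norm_eq_abs] using this
    · have hz0 : z ≠ 0 := by intro h; rw [h] at hz; linarith [hz.1]
      have hz1 : (1:ℝ) - z ≠ 0 := by intro h; have := hz.2; nlinarith [hβ.2, sub_eq_zero.mp h]
      have d1 : HasDerivWithinAt Real.log z⁻¹ (Set.Icc (1-β) β) z :=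
        (Real.hasDerivAt_log hz0).hasDerivWithinAt
      have d2 : HasDerivWithinAt (fun z : ℝ => Real.log (1 - z)) ((1-z)⁻¹ * (-1)) (Set.Icc (1-β) β) z := by
        exact (Real.hasDerivAt_log hz1).comp_hasDerivWithinAt z
          (((hasDerivWithinAt_const _ _ (1:ℝ)).sub (hasDerivWithinAt_id _ _)).congr_deriv (by ring))
      have := d1.sub d2
      convert this using 1; rfl; beta_reduce; ring
    · have hz1 : 1 - β ≤ z := hz.1
      have hz2 : 1 - β ≤ 1 - z := by linarith [hz.2]
      have e1 : z⁻¹ ≤ (1-β)⁻¹ := by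
        apply inv_anti₀ h1 hz1
      have e2 : (1-z)⁻¹ ≤ (1-β)⁻¹ := by
        apply inv_anti₀ h1 hz2
      have hz0 : 0 < z := lt_of_lt_of_le h1 hz1
      have hz10 : 0 < 1 - z := lt_of_lt_of_le h1 hz2
      rw [Real.norm_eq_abs, abs_of_nonneg (by positivity)]
      rw [div_eq_mul_inv]
      linarith
  calc |(Real.log u - Real.log (1-u)) - (Real.log w - Real.log (1-w))|
      ≤ (2/(1-β)) * |u - w| := key u (memIcc x) w (memIcc y)
    _ ≤ (2/(1-β)) * |x - y| := by
        apply mul_le_mul_of_nonneg_left _ (by positivity)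
        calc |u - w| ≤ |min β x - min β y| := by
              rw [hu, hw, max_comm (1-β) _, max_comm (1-β) _]
              exact abs_max_sub_max_le_abs _ _ _
          _ ≤ |x - y| := by
              calc |min β x - min β y| ≤ max |β - β| |x - y| := abs_min_sub_min_le_max _ _ _ _
                _ = |x - y| := by simp
end flog


lemma integrable_of_bound {α : Type*} [MeasurableSpace α] (μ : Measure α) [IsFiniteMeasure μ]
    (f : α → ℝ) (hf : AEStronglyMeasurable f μ) (B : ℝ) (hB : ∀ x, |f x| ≤ B) :
    Integrable f μ :=
  Integrable.mono' (integrable_const B) hf (ae_of_all _ fun x => by simpa using hB x)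

lemma gauss_pdf_shift (v : ℝ≥0) (hv : v ≠ 0) (s x : ℝ) :
    Real.exp (s * x) * gaussianPDFReal 0 v x
      = Real.exp (s^2 * v / 2) * gaussianPDFReal (s*v) v x := by
  have hv' : (0:ℝ) < v := by positivity
  have hexp : rexp (s*x) * rexp (-(x-0)^2/(2*(v:ℝ))) = rexp (s^2*v/2) * rexp (-(x-s*v)^2/(2*v)) := by
    rw [← Real.exp_add, ← Real.exp_add]; congr 1; field_simp; ring
  unfold gaussianPDFReal
  rw [mul_left_comm, hexp, mul_left_comm]

lemma gauss_mgf (v : ℝ≥0) (hv : v ≠ 0) (s : ℝ) :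
    ∫ x, Real.exp (s * x) ∂(gaussianReal 0 v) = Real.exp (s^2 * v / 2) := by
  rw [gaussianReal_of_var_ne_zero 0 hv]
  have hpdf : (gaussianPDF 0 v) = fun x => ((Real.toNNReal (gaussianPDFReal 0 v x) : ℝ≥0) : ℝ≥0∞) := by
    funext x; rfl
  rw [hpdf]
  rw [integral_withDensity_eq_integral_smul ((measurable_gaussianPDFReal 0 v).real_toNNReal) _]
  have : ∀ x : ℝ, (Real.toNNReal (gaussianPDFReal 0 v x)) • rexp (s * x)
      = rexp (s^2 * v / 2) * gaussianPDFReal (s*v) v x := by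
    intro x
    rw [NNReal.smul_def, smul_eq_mul, Real.coe_toNNReal _ (gaussianPDFReal_nonneg 0 v x), mul_comm]
    exact gauss_pdf_shift v hv s x
  simp_rw [this]
  rw [integral_const_mul, integral_gaussianPDFReal_eq_one (s*v) hv, mul_one]

lemma gauss_exp_integrable (v : ℝ≥0) (hv : v ≠ 0) (s : ℝ) :
    Integrable (fun x => Real.exp (s * x)) (gaussianReal 0 v) := by
  rw [gaussianReal_of_var_ne_zero 0 hv]
  rw [integrable_withDensity_iff (measurable_gaussianPDF 0 v)
    (ae_of_all _ (fun x => ENNReal.ofReal_lt_top))]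
  have : ∀ x:ℝ, rexp (s*x) * (gaussianPDF 0 v x).toReal
      = rexp (s^2 * v / 2) * gaussianPDFReal (s*v) v x := by
    intro x
    rw [gaussianPDF, ENNReal.toReal_ofReal (gaussianPDFReal_nonneg 0 v x)]
    exact gauss_pdf_shift v hv s x
  simp_rw [this]
  exact (integrable_gaussianPDFReal (s*v) v).const_mul _



lemma gaussLip (v : ℝ≥0) (hv : v ≠ 0) (φ : ℝ → ℝ) (hφm : Measurable φ) (M : ℝ)
    (hb : ∀ x, |φ x| ≤ M) (L t : ℝ) (hL : 0 ≤ L)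
    (hlip : ∀ x y, |φ x - φ y| ≤ L * |x - y|) :
    ∫ z, Real.exp (t * (φ z - ∫ w, φ w ∂(gaussianReal 0 v))) ∂(gaussianReal 0 v)
      ≤ Real.exp (t^2 * L^2 * v) := by
  set γ := gaussianReal 0 v with hγ
  set m := ∫ w, φ w ∂γ with hm
  have hφi : Integrable φ γ := integrable_of_bound γ φ hφm.aestronglyMeasurable M hb
  have hmM : |m| ≤ M := by
    calc |m| ≤ ∫ w, |φ w| ∂γ := by
          simpa [Real.norm_eq_abs] using norm_integral_le_integral_norm (μ := γ) φ
      _ ≤ ∫ _w, M ∂γ := integral_mono hφi.abs (integrable_const M) (fun w => hb w)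
      _ = M := by simp
  -- pointwise bound for the integrand of the double integral
  have hbd : ∀ z w : ℝ, |Real.exp (t * (φ z - φ w))| ≤ Real.exp (|t| * (2*M)) := by
    intro z w
    rw [abs_of_pos (Real.exp_pos _)]
    apply Real.exp_le_exp.mpr
    calc t * (φ z - φ w) ≤ |t * (φ z - φ w)| := le_abs_self _
      _ = |t| * |φ z - φ w| := abs_mul _ _
      _ ≤ |t| * (2*M) := by
          apply mul_le_mul_of_nonneg_left _ (abs_nonneg t)
          calc |φ z - φ w| ≤ |φ z| + |φ w| := abs_sub _ _
            _ ≤ 2*M := by linarith [hb z, hb w]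
  have hF2m : Measurable (fun zw : ℝ × ℝ => Real.exp (t * (φ zw.1 - φ zw.2))) :=
    (((hφm.comp measurable_fst).sub (hφm.comp measurable_snd)).const_mul t).exp
  have hF2i : Integrable (fun zw : ℝ × ℝ => Real.exp (t * (φ zw.1 - φ zw.2))) (γ.prod γ) :=
    integrable_of_bound _ _ hF2m.aestronglyMeasurable _ (fun zw => hbd zw.1 zw.2)
  -- Step 1: pointwise Jensen via tangent line
  have step1 : ∀ z : ℝ, Real.exp (t * (φ z - m)) ≤ ∫ w, Real.exp (t * (φ z - φ w)) ∂γ := by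
    intro z
    have hint2 : Integrable (fun w => Real.exp (t * (φ z - φ w))) γ :=
      integrable_of_bound _ _ ((((measurable_const.sub hφm).const_mul t).exp).aestronglyMeasurable)
        _ (fun w => hbd z w)
    have hint1 : Integrable (fun w => Real.exp (t * (φ z - m)) * (1 + t * (m - φ w))) γ := by
      apply Integrable.const_mul
      exact (integrable_const 1).add (((integrable_const m).sub hφi).const_mul t)
    have hI : ∫ w, (1 + t * (m - φ w)) ∂γ = 1 := by
      have h2 : Integrable (fun w => t * (m - φ w)) γ := ((integrable_const m).sub hφi).const_mul t
      rw [integral_add (integrable_const 1) h2, integral_const_mul,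
        integral_sub (integrable_const m) hφi]
      simp [← hm]
    have heq : ∫ w, Real.exp (t * (φ z - m)) * (1 + t * (m - φ w)) ∂γ
        = Real.exp (t * (φ z - m)) := by
      rw [integral_const_mul, hI, mul_one]
    calc Real.exp (t * (φ z - m))
        = ∫ w, Real.exp (t * (φ z - m)) * (1 + t * (m - φ w)) ∂γ := heq.symm
      _ ≤ ∫ w, Real.exp (t * (φ z - φ w)) ∂γ := by
          apply integral_mono hint1 hint2
          intro w
          have h1 : t * (m - φ w) + 1 ≤ Real.exp (t * (m - φ w)) := Real.add_one_le_exp _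
          have h2 : (0:ℝ) < Real.exp (t * (φ z - m)) := Real.exp_pos _
          calc Real.exp (t * (φ z - m)) * (1 + t * (m - φ w))
              ≤ Real.exp (t * (φ z - m)) * Real.exp (t * (m - φ w)) := by
                apply mul_le_mul_of_nonneg_left _ (le_of_lt h2); linarith
            _ = Real.exp (t * (φ z - φ w)) := by rw [← Real.exp_add]; ring_nf
  -- Step 2-3: integrate and pass to the product
  have step23 : ∫ z, Real.exp (t * (φ z - m)) ∂γ
      ≤ ∫ zw : ℝ × ℝ, Real.exp (t * (φ zw.1 - φ zw.2)) ∂(γ.prod γ) := by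
    rw [← integral_integral (f := fun z w => Real.exp (t * (φ z - φ w))) hF2i]
    apply integral_mono _ hF2i.integral_prod_left step1
    exact integrable_of_bound _ _ (((hφm.sub measurable_const).const_mul t).exp).aestronglyMeasurable
      (Real.exp (|t| * (2*M))) (fun z => by
        rw [abs_of_pos (Real.exp_pos _)]
        apply Real.exp_le_exp.mpr
        calc t * (φ z - m) ≤ |t * (φ z - m)| := le_abs_self _
          _ = |t| * |φ z - m| := abs_mul _ _
          _ ≤ |t| * (2*M) := by
              apply mul_le_mul_of_nonneg_left _ (abs_nonneg t)
              calc |φ z - m| ≤ |φ z| + |m| := abs_sub _ _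
                _ ≤ 2*M := by linarith [hb z, hmM])
  -- Step 4: symmetrize
  have hswap : ∫ zw : ℝ × ℝ, Real.exp (-t * (φ zw.1 - φ zw.2)) ∂(γ.prod γ)
      = ∫ zw : ℝ × ℝ, Real.exp (t * (φ zw.1 - φ zw.2)) ∂(γ.prod γ) := by
    have h := integral_map (μ := γ.prod γ) measurable_swap.aemeasurable
      (f := fun zw : ℝ × ℝ => Real.exp (t * (φ zw.1 - φ zw.2)))
      (by rw [Measure.prod_swap]; exact hF2m.aestronglyMeasurable)
    rw [Measure.prod_swap] at h
    simp only [Prod.fst_swap, Prod.snd_swap] at h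
    calc ∫ zw : ℝ × ℝ, Real.exp (-t * (φ zw.1 - φ zw.2)) ∂(γ.prod γ)
        = ∫ zw : ℝ × ℝ, Real.exp (t * (φ zw.2 - φ zw.1)) ∂(γ.prod γ) := by
          congr 1; funext zw; congr 1; ring
      _ = ∫ zw : ℝ × ℝ, Real.exp (t * (φ zw.1 - φ zw.2)) ∂(γ.prod γ) := h.symm
  have step4 : ∫ zw : ℝ × ℝ, Real.exp (t * (φ zw.1 - φ zw.2)) ∂(γ.prod γ)
      = ∫ zw : ℝ × ℝ, Real.cosh (t * (φ zw.1 - φ zw.2)) ∂(γ.prod γ) := by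
    have hF2mi : Integrable (fun zw : ℝ × ℝ => Real.exp (-t * (φ zw.1 - φ zw.2))) (γ.prod γ) :=
      integrable_of_bound _ _ ((((hφm.comp measurable_fst).sub
        (hφm.comp measurable_snd)).const_mul (-t)).exp).aestronglyMeasurable
        (Real.exp (|(-t)| * (2*M))) (fun zw => by
          rw [abs_of_pos (Real.exp_pos _)]
          apply Real.exp_le_exp.mpr
          calc (-t) * (φ zw.1 - φ zw.2) ≤ |(-t) * (φ zw.1 - φ zw.2)| := le_abs_self _
            _ = |(-t)| * |φ zw.1 - φ zw.2| := abs_mul _ _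
            _ ≤ |(-t)| * (2*M) := by
                apply mul_le_mul_of_nonneg_left _ (abs_nonneg _)
                calc |φ zw.1 - φ zw.2| ≤ |φ zw.1| + |φ zw.2| := abs_sub _ _
                  _ ≤ 2*M := by linarith [hb zw.1, hb zw.2])
    have : ∀ zw : ℝ × ℝ, Real.cosh (t * (φ zw.1 - φ zw.2))
        = (Real.exp (t * (φ zw.1 - φ zw.2)) + Real.exp (-t * (φ zw.1 - φ zw.2))) / 2 := by
      intro zw; rw [Real.cosh_eq]; ring_nf
    simp_rw [this]
    rw [integral_div, integral_add hF2i hF2mi, hswap]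
    ring
  -- Step 5-6: bound by the Gaussian cosh integral
  have hmaj : ∀ zw : ℝ × ℝ, Real.cosh (t*L*(zw.1 - zw.2))
      = (Real.exp (t*L*zw.1) * Real.exp (-(t*L)*zw.2) + Real.exp (-(t*L)*zw.1) * Real.exp (t*L*zw.2)) / 2 := by
    intro zw; rw [Real.cosh_eq, ← Real.exp_add, ← Real.exp_add]; ring_nf
  have hmaji : Integrable (fun zw : ℝ × ℝ => Real.cosh (t*L*(zw.1 - zw.2))) (γ.prod γ) := by
    simp_rw [hmaj]
    exact (((gauss_exp_integrable v hv (t*L)).mul_prod (gauss_exp_integrable v hv (-(t*L)))).add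
      ((gauss_exp_integrable v hv (-(t*L))).mul_prod (gauss_exp_integrable v hv (t*L)))).div_const 2
  have step5 : ∫ zw : ℝ × ℝ, Real.cosh (t * (φ zw.1 - φ zw.2)) ∂(γ.prod γ)
      ≤ ∫ zw : ℝ × ℝ, Real.cosh (t*L*(zw.1 - zw.2)) ∂(γ.prod γ) := by
    apply integral_mono _ hmaji
    · intro zw
      apply Real.cosh_le_cosh.mpr
      calc |t * (φ zw.1 - φ zw.2)| = |t| * |φ zw.1 - φ zw.2| := abs_mul _ _
        _ ≤ |t| * (L * |zw.1 - zw.2|) := mul_le_mul_of_nonneg_left (hlip _ _) (abs_nonneg t)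
        _ = |t*L*(zw.1 - zw.2)| := by rw [abs_mul, abs_mul, abs_of_nonneg hL]; ring
    · refine integrable_of_bound _ _ ?_ (Real.cosh (|t| * (2*M))) ?_
      · exact ((((hφm.comp measurable_fst).sub
          (hφm.comp measurable_snd)).const_mul t).cosh).aestronglyMeasurable
      · intro zw
        rw [abs_of_pos (Real.cosh_pos _)]
        apply Real.cosh_le_cosh.mpr
        calc |t * (φ zw.1 - φ zw.2)| = |t| * |φ zw.1 - φ zw.2| := abs_mul _ _
          _ ≤ |t| * (2*M) := by
              apply mul_le_mul_of_nonneg_left _ (abs_nonneg t)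
              calc |φ zw.1 - φ zw.2| ≤ |φ zw.1| + |φ zw.2| := abs_sub _ _
                _ ≤ 2*M := by linarith [hb zw.1, hb zw.2]
          _ ≤ |(|t| * (2*M))| := le_abs_self _
  have step6 : ∫ zw : ℝ × ℝ, Real.cosh (t*L*(zw.1 - zw.2)) ∂(γ.prod γ)
      = Real.exp (t^2 * L^2 * v) := by
    simp_rw [hmaj]
    rw [integral_div, integral_add
      ((gauss_exp_integrable v hv (t*L)).mul_prod (gauss_exp_integrable v hv (-(t*L))))
      ((gauss_exp_integrable v hv (-(t*L))).mul_prod (gauss_exp_integrable v hv (t*L))),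
      integral_prod_mul (f := fun x => Real.exp (t*L*x)) (g := fun x => Real.exp (-(t*L)*x)),
      integral_prod_mul (f := fun x => Real.exp (-(t*L)*x)) (g := fun x => Real.exp (t*L*x)),
      gauss_mgf v hv, gauss_mgf v hv, ← Real.exp_add, ← Real.exp_add]
    have : (t*L)^2 * (v:ℝ)/2 + (-(t*L))^2 * v/2 = t^2*L^2*v := by ring
    rw [this]
    ring
  calc ∫ z, Real.exp (t * (φ z - m)) ∂γ
      ≤ ∫ zw : ℝ × ℝ, Real.exp (t * (φ zw.1 - φ zw.2)) ∂(γ.prod γ) := step23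
    _ = ∫ zw : ℝ × ℝ, Real.cosh (t * (φ zw.1 - φ zw.2)) ∂(γ.prod γ) := step4
    _ ≤ ∫ zw : ℝ × ℝ, Real.cosh (t*L*(zw.1 - zw.2)) ∂(γ.prod γ) := step5
    _ = Real.exp (t^2 * L^2 * v) := step6


/-- Two-point subGaussian bound via symmetrization. -/
lemma twoPoint (p : ℝ) (hp0 : 0 ≤ p) (hp1 : p ≤ 1) (t a b c : ℝ) (hc : |b - a| ≤ c) :
    (1-p) * Real.exp (t*a) + p * Real.exp (t*b)
      ≤ Real.exp (t * ((1-p)*a + p*b) + t^2 * c^2 / 2) := by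
  set q := 1 - p with hq
  have hq0 : 0 ≤ q := by linarith
  set m := q*a + p*b with hm
  -- step 1 : exp (-t*m) ≤ q * exp (-t*a) + p * exp (-t*b)
  have step1 : Real.exp (-(t*m)) ≤ q * Real.exp (-(t*a)) + p * Real.exp (-(t*b)) := by
    have h1 : Real.exp (-(t*m)) * (t*(m - a) + 1) ≤ Real.exp (-(t*a)) := by
      calc Real.exp (-(t*m)) * (t*(m-a) + 1) ≤ Real.exp (-(t*m)) * Real.exp (t*(m-a)) :=
            mul_le_mul_of_nonneg_left (Real.add_one_le_exp _) (le_of_lt (Real.exp_pos _))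
        _ = Real.exp (-(t*a)) := by rw [← Real.exp_add]; ring_nf
    have h2 : Real.exp (-(t*m)) * (t*(m - b) + 1) ≤ Real.exp (-(t*b)) := by
      calc Real.exp (-(t*m)) * (t*(m-b) + 1) ≤ Real.exp (-(t*m)) * Real.exp (t*(m-b)) :=
            mul_le_mul_of_nonneg_left (Real.add_one_le_exp _) (le_of_lt (Real.exp_pos _))
        _ = Real.exp (-(t*b)) := by rw [← Real.exp_add]; ring_nf
    have := add_le_add (mul_le_mul_of_nonneg_left h1 hq0) (mul_le_mul_of_nonneg_left h2 hp0)
    calc Real.exp (-(t*m)) = q * (Real.exp (-(t*m)) * (t*(m-a)+1)) + p * (Real.exp (-(t*m)) * (t*(m-b)+1)) := by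
          have hqm : q*(t*(m-a)) + p*(t*(m-b)) = 0 := by simp only [hm, hq]; ring
          have : q * (Real.exp (-(t*m)) * (t*(m-a)+1)) + p * (Real.exp (-(t*m)) * (t*(m-b)+1))
              = Real.exp (-(t*m)) * (q*(t*(m-a)) + p*(t*(m-b)) + (q + p)) := by ring
          rw [this, hqm]; rw [hq]; ring_nf
      _ ≤ q * Real.exp (-(t*a)) + p * Real.exp (-(t*b)) := this
  -- step 2 : product bound
  have step2 : (q * Real.exp (t*a) + p * Real.exp (t*b)) * (q * Real.exp (-(t*a)) + p * Real.exp (-(t*b)))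
      ≤ Real.exp (t^2 * c^2 / 2) := by
    have hch : Real.cosh (t*(b-a)) ≤ Real.exp (t^2*c^2/2) := by
      calc Real.cosh (t*(b-a)) ≤ Real.exp ((t*(b-a))^2/2) := Real.cosh_le_exp_half_sq _
        _ ≤ Real.exp (t^2*c^2/2) := by
            apply Real.exp_le_exp.mpr
            have h1 : |t*(b-a)| ≤ abs t * c := by
              rw [abs_mul]; exact mul_le_mul_of_nonneg_left hc (abs_nonneg t)
            have := sq_le_sq' (neg_le_of_abs_le h1) (le_of_abs_le h1)
            calc (t*(b-a))^2/2 ≤ (abs t * c)^2/2 := by linarith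
              _ = t^2*c^2/2 := by rw [mul_pow, sq_abs]
    have hexpand : (q * Real.exp (t*a) + p * Real.exp (t*b)) * (q * Real.exp (-(t*a)) + p * Real.exp (-(t*b)))
        = q^2 + p^2 + 2*p*q * Real.cosh (t*(b-a)) := by
      rw [Real.cosh_eq]
      rw [show (q * Real.exp (t*a) + p * Real.exp (t*b)) * (q * Real.exp (-(t*a)) + p * Real.exp (-(t*b)))
          = q^2 * (Real.exp (t*a) * Real.exp (-(t*a))) + p^2 * (Real.exp (t*b) * Real.exp (-(t*b)))
            + p*q*(Real.exp (t*b) * Real.exp (-(t*a)) + Real.exp (t*a) * Real.exp (-(t*b))) by ring]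
      rw [← Real.exp_add, ← Real.exp_add, ← Real.exp_add, ← Real.exp_add]
      ring_nf
      simp only [Real.exp_zero]
      ring
    rw [hexpand]
    have h1 : (1:ℝ) ≤ Real.exp (t^2*c^2/2) := by
      rw [show (1:ℝ) = Real.exp 0 by simp]; apply Real.exp_le_exp.mpr; positivity
    have hpq : q^2 + p^2 + 2*p*q = 1 := by rw [hq]; ring
    nlinarith [mul_nonneg (mul_nonneg hp0 hq0) (sub_nonneg.mpr hch),
      mul_nonneg (add_nonneg (sq_nonneg q) (sq_nonneg p)) (sub_nonneg.mpr h1)]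
  -- combine
  have hpos : 0 < Real.exp (t*m) := Real.exp_pos _
  calc q * Real.exp (t*a) + p * Real.exp (t*b)
      = Real.exp (t*m) * (Real.exp (-(t*m)) * (q * Real.exp (t*a) + p * Real.exp (t*b))) := by
        rw [← mul_assoc, ← Real.exp_add, add_neg_cancel, Real.exp_zero, one_mul]
    _ ≤ Real.exp (t*m) * ((q * Real.exp (-(t*a)) + p * Real.exp (-(t*b))) * (q * Real.exp (t*a) + p * Real.exp (t*b))) := by
        apply mul_le_mul_of_nonneg_left _ (le_of_lt hpos)
        apply mul_le_mul_of_nonneg_right step1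
        positivity
    _ ≤ Real.exp (t*m) * Real.exp (t^2*c^2/2) := by
        apply mul_le_mul_of_nonneg_left _ (le_of_lt hpos)
        rw [mul_comm]; exact step2
    _ = Real.exp (t * m + t^2*c^2/2) := (Real.exp_add _ _).symm



noncomputable def bwt (p : ℝ) (n k : ℕ) : ℝ := (n.choose k : ℝ) * p ^ k * (1 - p) ^ (n - k)

lemma bwt_zero (p : ℝ) (n : ℕ) : bwt p n 0 = (1-p)^n := by unfold bwt; simp

lemma bwt_top (p : ℝ) (n : ℕ) : bwt p n (n+1) = 0 := by
  unfold bwt; rw [Nat.choose_succ_self]; simp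

lemma bwt_succ (p : ℝ) (n j : ℕ) (hj : j < n + 1) :
    bwt p (n+1) (j+1) = p * bwt p n j + (1-p) * bwt p n (j+1) := by
  rcases Nat.lt_or_ge j n with hlt | hge
  · unfold bwt
    have h1 : n + 1 - (j+1) = n - j := by omega
    have h2 : n - j = (n - (j+1)) + 1 := by omega
    rw [h1, Nat.choose_succ_succ, h2]
    push_cast
    rw [pow_succ]
    ring
  · have hj' : j = n := by omega
    subst hj'
    rw [bwt_top, mul_zero, add_zero]
    unfold bwt
    have h1 : j + 1 - (j+1) = 0 := by omega
    have h2 : j - j = 0 := by omega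
    rw [h1, h2, Nat.choose_self, Nat.choose_self]
    push_cast
    ring

lemma pascalSum (p : ℝ) (n : ℕ) (h : ℕ → ℝ) :
    ∑ k ∈ range (n+2), bwt p (n+1) k * h k
      = ∑ k ∈ range (n+1), bwt p n k * ((1-p) * h k + p * h (k+1)) := by
  have lhs : ∑ k ∈ range (n+2), bwt p (n+1) k * h k
      = ∑ j ∈ range (n+1), bwt p (n+1) (j+1) * h (j+1) + bwt p (n+1) 0 * h 0 :=
    Finset.sum_range_succ' (fun k => bwt p (n+1) k * h k) (n+1)
  have hT : ∑ j ∈ range (n+1), bwt p n (j+1) * h (j+1)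
      = ∑ k ∈ range (n+1), bwt p n k * h k - bwt p n 0 * h 0 := by
    rw [Finset.sum_range_succ (fun j => bwt p n (j+1) * h (j+1)) n, bwt_top, zero_mul, add_zero,
      Finset.sum_range_succ' (fun k => bwt p n k * h k) n]
    ring
  have hmid : ∑ j ∈ range (n+1), bwt p (n+1) (j+1) * h (j+1)
      = p * ∑ j ∈ range (n+1), bwt p n j * h (j+1)
        + (1-p) * ∑ j ∈ range (n+1), bwt p n (j+1) * h (j+1) := by
    rw [Finset.mul_sum, Finset.mul_sum, ← Finset.sum_add_distrib]
    apply Finset.sum_congr rfl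
    intro j hj
    rw [bwt_succ p n j (Finset.mem_range.mp hj)]
    ring
  rw [lhs, hmid, hT, bwt_zero, bwt_zero]
  have : ∑ k ∈ range (n+1), bwt p n k * ((1-p) * h k + p * h (k+1))
      = (1-p) * ∑ k ∈ range (n+1), bwt p n k * h k + p * ∑ k ∈ range (n+1), bwt p n k * h (k+1) := by
    rw [Finset.mul_sum, Finset.mul_sum, ← Finset.sum_add_distrib]
    apply Finset.sum_congr rfl; intro k hk; ring
  rw [this, pow_succ]
  ring

lemma binomSum (p : ℝ) (hp0 : 0 ≤ p) (hp1 : p ≤ 1) (t c : ℝ) :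
    ∀ (n : ℕ) (g : ℕ → ℝ), (∀ k, |g (k+1) - g k| ≤ c) →
    ∑ k ∈ range (n+1), bwt p n k * Real.exp (t * g k)
      ≤ Real.exp (t * (∑ k ∈ range (n+1), bwt p n k * g k) + n * (t^2 * c^2 / 2)) := by
  intro n
  induction n with
  | zero =>
    intro g hg
    simp [bwt]
  | succ n ih =>
    intro g hg
    have hgn : ∀ k, |(fun k => (1-p) * g k + p * g (k+1)) (k+1) - (fun k => (1-p) * g k + p * g (k+1)) k| ≤ c := by
      intro k
      simp only []
      have : (1-p) * g (k+1) + p * g (k+2) - ((1-p) * g k + p * g (k+1))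
          = (1-p) * (g (k+1) - g k) + p * (g (k+2) - g (k+1)) := by ring
      rw [this]
      calc |(1-p) * (g (k+1) - g k) + p * (g (k+2) - g (k+1))|
          ≤ |(1-p) * (g (k+1) - g k)| + |p * (g (k+2) - g (k+1))| := abs_add_le _ _
        _ = (1-p) * |g (k+1) - g k| + p * |g (k+2) - g (k+1)| := by
            rw [abs_mul, abs_mul, abs_of_nonneg (by linarith), abs_of_nonneg hp0]
        _ ≤ (1-p) * c + p * c := by
            have h1 := hg k; have h2 := hg (k+1)
            have hc : 0 ≤ c := le_trans (abs_nonneg _) (hg 0)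
            apply add_le_add
            · exact mul_le_mul_of_nonneg_left h1 (by linarith)
            · exact mul_le_mul_of_nonneg_left h2 hp0
        _ = c := by ring
    calc ∑ k ∈ range (n+2), bwt p (n+1) k * Real.exp (t * g k)
        = ∑ k ∈ range (n+1), bwt p n k * ((1-p) * Real.exp (t * g k) + p * Real.exp (t * g (k+1))) :=
          pascalSum p n (fun k => Real.exp (t * g k))
      _ ≤ ∑ k ∈ range (n+1), bwt p n k * Real.exp (t * ((1-p) * g k + p * g (k+1)) + t^2*c^2/2) := by
          apply Finset.sum_le_sum
          intro k hk
          apply mul_le_mul_of_nonneg_left (twoPoint p hp0 hp1 t (g k) (g (k+1)) c (hg k))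
          unfold bwt
          apply mul_nonneg (mul_nonneg (Nat.cast_nonneg _) (pow_nonneg hp0 _))
            (pow_nonneg (by linarith) _)
      _ = Real.exp (t^2*c^2/2) * ∑ k ∈ range (n+1), bwt p n k * Real.exp (t * ((1-p) * g k + p * g (k+1))) := by
          rw [Finset.mul_sum]
          apply Finset.sum_congr rfl
          intro k hk
          rw [Real.exp_add]
          ring
      _ ≤ Real.exp (t^2*c^2/2) * Real.exp (t * (∑ k ∈ range (n+1), bwt p n k * ((1-p) * g k + p * g (k+1))) + n * (t^2*c^2/2)) := by
          apply mul_le_mul_of_nonneg_left _ (le_of_lt (Real.exp_pos _))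
          exact ih (fun k => (1-p) * g k + p * g (k+1)) hgn
      _ = Real.exp (t * (∑ k ∈ range (n+2), bwt p (n+1) k * g k) + (n+1 : ℕ) * (t^2*c^2/2)) := by
          rw [← Real.exp_add, pascalSum p n g]
          congr 1
          push_cast
          ring


/-- **Lemma H.2 (SubGaussianity of the clipped logit of a Gaussian-perturbed binomial
proportion).** Fix `β ∈ (1/2, 1)`. There is a constant `C > 0` depending only on `β`
such that for all `ε, δ ∈ (0,1)`, `n ≥ 1`, `p ∈ [1−β, β]`, `Y_n ~ Binomial(n, p)` and
`X̃_n = Y_n/n + ξ_n` with `ξ_n` an independent Gaussian of mean `0` and variance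
`2·log(1.25/δ)/(εn)²`, the random variable `f(X̃_n)` is subGaussian with variance
proxy at most `C·(1/n + 8·log(1.25/δ)/(εn)²)`. -/
theorem gaussian_perturbed_binomial_clipped_logit_subgaussian
    (β : ℝ) (hβ : β ∈ Set.Ioo (1 / 2 : ℝ) 1) :
    ∃ C : ℝ, 0 < C ∧
      ∀ ε δ : ℝ, ε ∈ Set.Ioo (0 : ℝ) 1 → δ ∈ Set.Ioo (0 : ℝ) 1 →
      ∀ (n : ℕ), 1 ≤ n → ∀ p : ℝ, p ∈ Set.Icc (1 - β) β →
      ∀ (Ω : Type) [MeasurableSpace Ω] (P : Measure Ω),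
        IsProbabilityMeasure P →
      ∀ Y : Ω → ℕ, Measurable Y → HasBinomialLaw P Y n p →
      ∀ ξ : Ω → ℝ, Measurable ξ →
        P.map ξ =
          ProbabilityTheory.gaussianReal 0
            (Real.toNNReal (2 * Real.log (1.25 / δ) / (ε * n) ^ 2)) →
        ProbabilityTheory.IndepFun (fun ω => (Y ω : ℝ)) ξ P →
      ∀ t : ℝ,
        (∫ ω, Real.exp (t * (flog β ((Y ω : ℝ) / n + ξ ω) -
            ∫ ω', flog β ((Y ω' : ℝ) / n + ξ ω') ∂P)) ∂P) ≤
          Real.exp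
            (C * (1 / n + 8 * Real.log (1.25 / δ) / (ε * n) ^ 2) * t ^ 2 / 2) := by
  have hb1 : 0 < 1 - β := by simp [hβ.2]
  set L : ℝ := 2 / (1 - β) with hLdef
  have hL : 0 < L := by positivity
  set M : ℝ := Real.log (β / (1 - β)) with hMdef
  refine ⟨L^2, by positivity, ?_⟩
  intro ε δ hε hδ n hn p hp Ω mΩ P hP Y hY hYlaw ξ hξ hξlaw hindep t
  -- basic positivity facts
  have hn0 : (0:ℝ) < n := by exact_mod_cast hn
  have hΛ : 0 < Real.log (1.25 / δ) := by
    apply Real.log_pos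
    rw [lt_div_iff₀ hδ.1]
    linarith [hδ.2]
  have hεn : (0:ℝ) < (ε * n)^2 := pow_pos (mul_pos hε.1 hn0) 2
  have hvpos : (0:ℝ) < 2 * Real.log (1.25 / δ) / (ε * n) ^ 2 := by positivity
  set v : ℝ≥0 := Real.toNNReal (2 * Real.log (1.25 / δ) / (ε * n) ^ 2) with hvdef
  have hv : v ≠ 0 := ne_of_gt (Real.toNNReal_pos.mpr hvpos)
  have hvco : (v:ℝ) = 2 * Real.log (1.25 / δ) / (ε * n) ^ 2 :=
    Real.coe_toNNReal _ (le_of_lt hvpos)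
  set γ : Measure ℝ := gaussianReal 0 v with hγdef
  set ν : Measure ℕ := P.map Y with hνdef
  haveI hνP : IsProbabilityMeasure ν := Measure.isProbabilityMeasure_map hY.aemeasurable
  -- p bounds
  have hp0 : 0 ≤ p := le_trans (le_of_lt hb1) hp.1
  have hp1 : p ≤ 1 := le_trans hp.2 (le_of_lt hβ.2)
  have h1p : 0 ≤ 1 - p := by linarith [hp.2, hβ.2]
  -- independence of Y and ξ
  have hYξ : IndepFun Y ξ P := by
    have h := hindep.comp (φ := fun x : ℝ => ⌊x⌋₊) (ψ := id) Nat.measurable_floor measurable_id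
    have hcomp : (fun x : ℝ => ⌊x⌋₊) ∘ (fun ω => (Y ω : ℝ)) = Y := by
      funext ω; simp [Nat.floor_natCast]
    rwa [hcomp, Function.id_comp] at h
  -- joint law is the product law
  have hmap : P.map (fun ω => (Y ω, ξ ω)) = ν.prod γ := by
    rw [hνdef, ← hξlaw]
    exact (indepFun_iff_map_prod_eq_prod_map_map hY.aemeasurable hξ.aemeasurable).mp hYξ
  -- transfer of integrals
  have htrans : ∀ u : ℕ × ℝ → ℝ, Measurable u →
      ∫ ω, u (Y ω, ξ ω) ∂P = ∫ kz, u kz ∂(ν.prod γ) := by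
    intro u hu
    rw [← hmap]
    exact (integral_map (hY.prodMk hξ).aemeasurable hu.aestronglyMeasurable).symm
  -- ν-integrals as finite sums
  have hνs : ∀ k : ℕ, ν {k} = ENNReal.ofReal (bwt p n k) := by
    intro k
    rw [hνdef, Measure.map_apply hY (measurableSet_singleton k)]
    have : Y ⁻¹' {k} = {ω | Y ω = k} := by ext ω; simp
    rw [this, hYlaw k]
    rfl
  have hbwt_nonneg : ∀ k, 0 ≤ bwt p n k := fun k =>
    mul_nonneg (mul_nonneg (Nat.cast_nonneg _) (pow_nonneg hp0 _)) (pow_nonneg h1p _)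
  have hνsum : ∀ (w : ℕ → ℝ) (B : ℝ), (∀ k, |w k| ≤ B) →
      ∫ k, w k ∂ν = ∑ k ∈ range (n+1), bwt p n k * w k := by
    intro w B hB
    rw [integral_countable' (integrable_of_bound ν w
      (measurable_from_nat.aestronglyMeasurable) B hB)]
    rw [tsum_eq_sum (s := range (n+1)) ?_]
    · apply Finset.sum_congr rfl
      intro k hk
      rw [measureReal_def, hνs k, ENNReal.toReal_ofReal (hbwt_nonneg k), smul_eq_mul]
    · intro k hk
      have hk' : n < k := by simpa using hk
      rw [measureReal_def, hνs k]
      unfold bwt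
      rw [Nat.choose_eq_zero_of_lt hk']
      simp
  -- the function F and its properties
  set F : ℕ × ℝ → ℝ := fun kz => flog β ((kz.1 : ℝ) / n + kz.2) with hFdef
  have hFm : Measurable F := (flog_measurable hβ).comp
    (((measurable_from_nat (f := fun k : ℕ => (k:ℝ)/n)).comp measurable_fst).add measurable_snd)
  have hFb : ∀ kz, |F kz| ≤ M := fun kz => flog_bounded hβ _
  have hM0 : 0 ≤ M := le_trans (abs_nonneg _) (hFb (0,0))
  set G : ℕ → ℝ := fun k => ∫ z, flog β ((k : ℝ) / n + z) ∂γ with hGdef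
  -- integrability of φ_k and bounds for G
  have hφm : ∀ k : ℕ, Measurable (fun z => flog β ((k : ℝ) / n + z)) := fun k =>
    (flog_measurable hβ).comp (measurable_const.add measurable_id)
  have hφi : ∀ k : ℕ, Integrable (fun z => flog β ((k : ℝ) / n + z)) γ := fun k =>
    integrable_of_bound γ _ (hφm k).aestronglyMeasurable M (fun z => flog_bounded hβ _)
  have hGb : ∀ k, |G k| ≤ M := by
    intro k
    calc |G k| ≤ ∫ z, |flog β ((k : ℝ) / n + z)| ∂γ := by
          simpa [Real.norm_eq_abs] using
            norm_integral_le_integral_norm (μ := γ) (fun z => flog β ((k : ℝ) / n + z))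
      _ ≤ ∫ _z, M ∂γ := integral_mono (hφi k).abs (integrable_const M) (fun z => flog_bounded hβ _)
      _ = M := by simp
  have hGinc : ∀ k : ℕ, |G (k+1) - G k| ≤ L / n := by
    intro k
    have h1 : G (k+1) - G k = ∫ z, (flog β (((k:ℝ)+1) / n + z) - flog β ((k : ℝ) / n + z)) ∂γ := by
      rw [integral_sub ?_ (hφi k)]
      · congr 1
        apply integral_congr_ae
        filter_upwards with z
        push_cast
        ring_nf
      · exact integrable_of_bound γ _ ((flog_measurable hβ).comp
          (measurable_const.add measurable_id)).aestronglyMeasurable M (fun z => flog_bounded hβ _)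
    rw [h1]
    have hbd : ∀ z : ℝ, |flog β (((k:ℝ)+1) / n + z) - flog β ((k : ℝ) / n + z)| ≤ L / n := by
      intro z
      calc |flog β (((k:ℝ)+1) / n + z) - flog β ((k : ℝ) / n + z)|
          ≤ L * |(((k:ℝ)+1) / n + z) - ((k : ℝ) / n + z)| := flog_lip hβ _ _
        _ = L / n := by
            rw [show (((k:ℝ)+1) / n + z) - ((k : ℝ) / n + z) = 1 / n by ring]
            rw [abs_of_pos (by positivity)]
            ring
    calc |∫ z, (flog β (((k:ℝ)+1) / n + z) - flog β ((k : ℝ) / n + z)) ∂γ|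
        ≤ ∫ z, |flog β (((k:ℝ)+1) / n + z) - flog β ((k : ℝ) / n + z)| ∂γ := by
          simpa [Real.norm_eq_abs] using norm_integral_le_integral_norm (μ := γ)
            (fun z => flog β (((k:ℝ)+1) / n + z) - flog β ((k : ℝ) / n + z))
      _ ≤ ∫ _z, L / n ∂γ := by
          apply integral_mono _ (integrable_const _) hbd
          apply Integrable.abs
          apply Integrable.sub _ (hφi k)
          exact integrable_of_bound γ _ ((flog_measurable hβ).comp
            (measurable_const.add measurable_id)).aestronglyMeasurable M (fun z => flog_bounded hβ _)
      _ = L / n := by simp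
  -- identify μ
  set μ : ℝ := ∫ ω', flog β ((Y ω' : ℝ) / n + ξ ω') ∂P with hμdef
  have hFi : Integrable F (ν.prod γ) :=
    integrable_of_bound _ _ hFm.aestronglyMeasurable M hFb
  have hμeq : μ = ∑ k ∈ range (n+1), bwt p n k * G k := by
    rw [hμdef]
    rw [show (fun ω' => flog β ((Y ω' : ℝ) / n + ξ ω')) = (fun ω' => F (Y ω', ξ ω')) from rfl]
    rw [htrans F hFm, integral_prod F hFi]
    exact hνsum G M hGb
  have hsum1 : ∑ k ∈ range (n+1), bwt p n k = 1 := by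
    calc ∑ k ∈ range (n+1), bwt p n k
        = ∑ k ∈ range (n+1), p^k * (1-p)^(n-k) * (n.choose k : ℝ) := by
          apply Finset.sum_congr rfl; intro k _; unfold bwt; ring
      _ = (p + (1-p))^n := (add_pow p (1-p) n).symm
      _ = 1 := by norm_num
  have hμM : |μ| ≤ M := by
    rw [hμeq]
    calc |∑ k ∈ range (n+1), bwt p n k * G k|
        ≤ ∑ k ∈ range (n+1), |bwt p n k * G k| := Finset.abs_sum_le_sum_abs _ _
      _ ≤ ∑ k ∈ range (n+1), bwt p n k * M := by
          apply Finset.sum_le_sum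
          intro k _
          rw [abs_mul, abs_of_nonneg (hbwt_nonneg k)]
          exact mul_le_mul_of_nonneg_left (hGb k) (hbwt_nonneg k)
      _ = M := by rw [← Finset.sum_mul, hsum1, one_mul]
  -- the main exponential integrand
  have hEm : Measurable (fun kz : ℕ × ℝ => Real.exp (t * (F kz - μ))) :=
    ((hFm.sub measurable_const).const_mul t).exp
  have hEb : ∀ kz : ℕ × ℝ, |Real.exp (t * (F kz - μ))| ≤ Real.exp (|t| * (2*M)) := by
    intro kz
    rw [abs_of_pos (Real.exp_pos _)]
    apply Real.exp_le_exp.mpr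
    calc t * (F kz - μ) ≤ |t * (F kz - μ)| := le_abs_self _
      _ = |t| * |F kz - μ| := abs_mul _ _
      _ ≤ |t| * (2*M) := by
          apply mul_le_mul_of_nonneg_left _ (abs_nonneg t)
          calc |F kz - μ| ≤ |F kz| + |μ| := abs_sub _ _
            _ ≤ 2*M := by linarith [hFb kz, hμM]
  have hEi : Integrable (fun kz : ℕ × ℝ => Real.exp (t * (F kz - μ))) (ν.prod γ) :=
    integrable_of_bound _ _ hEm.aestronglyMeasurable _ hEb
  set I : ℕ → ℝ := fun k => ∫ z, Real.exp (t * (F (k, z) - μ)) ∂γ with hIdef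
  have hJ : (∫ ω, Real.exp (t * (flog β ((Y ω : ℝ) / n + ξ ω) - μ)) ∂P)
      = ∑ k ∈ range (n+1), bwt p n k * I k := by
    rw [show (fun ω => Real.exp (t * (flog β ((Y ω : ℝ) / n + ξ ω) - μ)))
      = (fun ω => (fun kz : ℕ × ℝ => Real.exp (t * (F kz - μ))) (Y ω, ξ ω)) from rfl]
    rw [htrans _ hEm, integral_prod _ hEi]
    apply hνsum I (Real.exp (|t| * (2*M)))
    intro k
    calc |I k| ≤ ∫ z, |Real.exp (t * (F (k, z) - μ))| ∂γ := by
          simpa [Real.norm_eq_abs] using norm_integral_le_integral_norm (μ := γ)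
            (fun z => Real.exp (t * (F (k, z) - μ)))
      _ ≤ ∫ _z, Real.exp (|t| * (2*M)) ∂γ := by
          apply integral_mono _ (integrable_const _) (fun z => hEb (k, z))
          apply Integrable.abs
          exact integrable_of_bound _ _ (((((hφm k).sub measurable_const).const_mul t).exp).aestronglyMeasurable)
            _ (fun z => hEb (k, z))
      _ = Real.exp (|t| * (2*M)) := by simp
  -- bound each I k using the Gaussian lemma
  have hIk : ∀ k, I k ≤ Real.exp (t * (G k - μ)) * Real.exp (t^2 * L^2 * v) := by
    intro k
    have hsplit : ∀ z : ℝ, Real.exp (t * (F (k, z) - μ))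
        = Real.exp (t * (G k - μ)) * Real.exp (t * (F (k, z) - G k)) := by
      intro z
      rw [← Real.exp_add]
      congr 1
      ring
    have hIeq : I k = Real.exp (t * (G k - μ)) * ∫ z, Real.exp (t * (F (k, z) - G k)) ∂γ := by
      rw [hIdef]
      simp only [hsplit]
      exact integral_const_mul _ _
    rw [hIeq]
    apply mul_le_mul_of_nonneg_left _ (le_of_lt (Real.exp_pos _))
    have hGk : G k = ∫ w, flog β ((k : ℝ) / n + w) ∂(gaussianReal 0 v) := by
      rw [hGdef, ← hγdef]
    have hlipk : ∀ x y : ℝ, |flog β ((k : ℝ) / n + x) - flog β ((k : ℝ) / n + y)| ≤ L * |x - y| := by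
      intro x y
      calc |flog β ((k : ℝ) / n + x) - flog β ((k : ℝ) / n + y)|
          ≤ L * |((k : ℝ) / n + x) - ((k : ℝ) / n + y)| := flog_lip hβ _ _
        _ = L * |x - y| := by rw [show ((k : ℝ) / n + x) - ((k : ℝ) / n + y) = x - y by ring]
    have := gaussLip v hv (fun z => flog β ((k : ℝ) / n + z)) (hφm k) M
      (fun z => flog_bounded hβ _) L t (le_of_lt hL) hlipk
    rw [← hGk] at this
    rw [show (fun z => Real.exp (t * (F (k, z) - G k)))
      = (fun z => Real.exp (t * (flog β ((k : ℝ) / n + z) - G k))) from rfl]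
    rw [hγdef]
    exact this
  -- sum up, apply the binomial bound
  have hginc : ∀ k : ℕ, |(G (k+1) - μ) - (G k - μ)| ≤ L / n := by
    intro k
    rw [show (G (k+1) - μ) - (G k - μ) = G (k+1) - G k by ring]
    exact hGinc k
  have hbin := binomSum p hp0 hp1 t (L/n) n (fun k => G k - μ) hginc
  have hcenter : ∑ k ∈ range (n+1), bwt p n k * (G k - μ) = 0 := by
    have : ∑ k ∈ range (n+1), bwt p n k * (G k - μ)
        = (∑ k ∈ range (n+1), bwt p n k * G k) - (∑ k ∈ range (n+1), bwt p n k) * μ := by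
      rw [Finset.sum_mul, ← Finset.sum_sub_distrib]
      apply Finset.sum_congr rfl; intro k _; ring
    rw [this, hsum1, hμeq]
    ring
  rw [hcenter] at hbin
  have hexp2 : (n:ℝ) * (t^2 * (L/n)^2 / 2) = t^2 * L^2 / (2*n) := by
    field_simp
  have hfinal : ∑ k ∈ range (n+1), bwt p n k * Real.exp (t * (G k - μ))
      ≤ Real.exp (t^2 * L^2 / (2*n)) := by
    calc ∑ k ∈ range (n+1), bwt p n k * Real.exp (t * (G k - μ)) ≤ Real.exp (t * 0 + n * (t^2 * (L/n)^2/2)) := hbin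
      _ = Real.exp (t^2 * L^2 / (2*n)) := by rw [mul_zero, zero_add, hexp2]
  calc (∫ ω, Real.exp (t * (flog β ((Y ω : ℝ) / n + ξ ω) - μ)) ∂P)
      = ∑ k ∈ range (n+1), bwt p n k * I k := hJ
    _ ≤ ∑ k ∈ range (n+1), bwt p n k * (Real.exp (t * (G k - μ)) * Real.exp (t^2 * L^2 * v)) := by
        apply Finset.sum_le_sum
        intro k _
        exact mul_le_mul_of_nonneg_left (hIk k) (hbwt_nonneg k)
    _ = Real.exp (t^2 * L^2 * v) * ∑ k ∈ range (n+1), bwt p n k * Real.exp (t * (G k - μ)) := by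
        rw [Finset.mul_sum]
        apply Finset.sum_congr rfl; intro k _; ring
    _ ≤ Real.exp (t^2 * L^2 * v) * Real.exp (t^2 * L^2 / (2*n)) :=
        mul_le_mul_of_nonneg_left hfinal (le_of_lt (Real.exp_pos _))
    _ = Real.exp (t^2 * L^2 * v + t^2 * L^2 / (2*n)) := (Real.exp_add _ _).symm
    _ ≤ Real.exp (L^2 * (1 / n + 8 * Real.log (1.25 / δ) / (ε * n) ^ 2) * t ^ 2 / 2) := by
        apply Real.exp_le_exp.mpr
        rw [show 8 * Real.log (1.25 / δ) / (ε * n) ^ 2 = 4 * (v:ℝ) by rw [hvco]; ring]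
        have hv0 : (0:ℝ) ≤ (v:ℝ) := v.coe_nonneg
        have h1 : 0 ≤ L^2 * t^2 * (v:ℝ) := by positivity
        have h2 : L^2 * (1 / n + 4 * (v:ℝ)) * t^2 / 2
            = t^2 * L^2 / (2*n) + 2 * (L^2 * t^2 * (v:ℝ)) := by
          field_simp
          ring
        rw [h2]
        nlinarith
end
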